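/- arXiv:2504.06049 — 3 statements merged into one kernel-verified Lean document; each statement's English description precedes it below -/
import Mathlib

section
/- If X is a regular d-space (and an ENR) with an initial point, then the topological complexity of the underlying space satisfies TC(X) ≤ 2·vTC(X) − 1. -/
open unitInterval Set Topology

noncomputable section

/-- Concatenation of two continuous maps from the unit interval, when the endpoint of the
first is the starting point of the second. -/
def concatCM {X : Type*} [TopologicalSpace X] (γ δ : C(I, X)) (h : γ 1 = δ 0) : C(I, X) :=
  ((⟨γ, rfl, rfl⟩ : Path (γ 0) (γ 1)).trans
    ((⟨δ, rfl, rfl⟩ : Path (δ 0) (δ 1)).cast h rfl)).toContinuousMap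

lemma concatCM_apply {X : Type*} [TopologicalSpace X] (γ δ : C(I, X)) (h : γ 1 = δ 0) (t : I) :
    concatCM γ δ h t =
      if ht : (t : ℝ) ≤ 1 / 2 then γ ⟨2 * t, (unitInterval.mul_pos_mem_iff two_pos).2 ⟨t.2.1, ht⟩⟩
      else δ ⟨2 * t - 1, unitInterval.two_mul_sub_one_mem_iff.2 ⟨(not_le.1 ht).le, t.2.2⟩⟩ := by
  have := Path.trans_apply (⟨γ, rfl, rfl⟩ : Path (γ 0) (γ 1))
    ((⟨δ, rfl, rfl⟩ : Path (δ 0) (δ 1)).cast h rfl) t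
  simpa [concatCM, Path.cast] using this

@[simp] lemma concatCM_zero {X : Type*} [TopologicalSpace X] (γ δ : C(I, X)) (h : γ 1 = δ 0) :
    concatCM γ δ h 0 = γ 0 := by
  simp [concatCM_apply]

@[simp] lemma concatCM_one {X : Type*} [TopologicalSpace X] (γ δ : C(I, X)) (h : γ 1 = δ 0) :
    concatCM γ δ h 1 = δ 1 := by
  rw [concatCM_apply]
  norm_num

lemma comp_concatCM {X Y : Type*} [TopologicalSpace X] [TopologicalSpace Y]
    (f : C(X, Y)) (γ δ : C(I, X)) (h : γ 1 = δ 0) :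
    f.comp (concatCM γ δ h) =
      concatCM (f.comp γ) (f.comp δ) (by simpa using congrArg f h) := by
  ext t
  simp only [ContinuousMap.comp_apply, concatCM_apply]
  split_ifs <;> rfl

lemma monotone_concatCM {Z : Type*} [TopologicalSpace Z] [Preorder Z] {γ δ : C(I, Z)}
    (h : γ 1 = δ 0) (hγ : Monotone γ) (hδ : Monotone δ) : Monotone ⇑(concatCM γ δ h) := by
  intro s t hst
  have hst' : (s : ℝ) ≤ (t : ℝ) := hst
  rw [concatCM_apply, concatCM_apply]
  split_ifs with hs ht ht
  · exact hγ (Subtype.mk_le_mk.2 (by linarith))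
  · calc γ _ ≤ γ 1 := hγ (unitInterval.le_one _)
      _ = δ 0 := h
      _ ≤ δ _ := hδ (unitInterval.nonneg _)
  · exact absurd (hst'.trans ht) hs
  · exact hδ (Subtype.mk_le_mk.2 (by linarith))

/-- A d-space structure on a topological space: a distinguished set of paths containing the
constant paths, closed under concatenation, and closed under pre-composition with
continuous non-decreasing reparametrizations of the interval. -/
structure DStruct (X : Type*) [TopologicalSpace X] where
  paths : Set C(I, X)
  const_mem : ∀ x : X, ContinuousMap.const I x ∈ paths
  concat_mem : ∀ γ ∈ paths, ∀ δ ∈ paths, ∀ h : γ 1 = δ 0, concatCM γ δ h ∈ paths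
  reparam_mem : ∀ γ ∈ paths, ∀ φ : C(I, I), Monotone φ → γ.comp φ ∈ paths

variable {X : Type*} [TopologicalSpace X] {Y : Type*} [TopologicalSpace Y]

/-- The set `Γ_X` of pairs of points joined by a directed path. -/
def dGamma (dX : DStruct X) : Set (X × X) :=
  {q | ∃ γ ∈ dX.paths, γ 0 = q.1 ∧ γ 1 = q.2}

/-- The set `dX(x, x')` of directed paths from `x` to `x'`. -/
def dBetween (dX : DStruct X) (x x' : X) : Set C(I, X) :=
  {γ | γ ∈ dX.paths ∧ γ 0 = x ∧ γ 1 = x'}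

/-- An initial point of a d-space: a point from which there is a directed path to any point. -/
def IsInitialPoint (dX : DStruct X) (x₀ : X) : Prop := ∀ x : X, (x₀, x) ∈ dGamma dX

/-- A d-space is strongly connected if any ordered pair of points is joined by a d-path. -/
def StronglyConnected (dX : DStruct X) : Prop := dGamma dX = Set.univ

/-- A space is a Euclidean Neighbourhood Retract if it embeds in some Euclidean space as a
retract of an open neighbourhood of itself. -/
def IsENR (A : Type*) [TopologicalSpace A] : Prop :=
  ∃ (N : ℕ) (e : A → (Fin N → ℝ)), IsEmbedding e ∧
    ∃ U : Set (Fin N → ℝ), IsOpen U ∧ Set.range e ⊆ U ∧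
      ∃ r : U → A, Continuous r ∧ ∀ (a : A) (h : e a ∈ U), r ⟨e a, h⟩ = a

/-- A subset of a space is an ENR if the corresponding subspace is an ENR. -/
def IsENRSet {Z : Type*} [TopologicalSpace Z] (A : Set Z) : Prop := IsENR A

/-- A subset of `X × X` admits a continuous section of the directed endpoint map
`π⃗ : dX → Γ_X`. -/
def DSecSet (dX : DStruct X) (U : Set (X × X)) : Prop :=
  ∃ s : U → C(I, X), Continuous s ∧
    ∀ u : U, s u ∈ dX.paths ∧ (s u) 0 = u.1.1 ∧ (s u) 1 = u.1.2

/-- The directed topological complexity of a d-space: the smallest number of ENRs covering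
`Γ_X`, each admitting a continuous section of the directed endpoint map. -/
def vTC (dX : DStruct X) : ℕ∞ :=
  sInf {n : ℕ∞ | ∃ m : ℕ, n = (m : ℕ∞) ∧ ∃ U : Fin m → Set (X × X),
    (∀ i, IsENRSet (U i) ∧ DSecSet dX (U i)) ∧ dGamma dX ⊆ ⋃ i, U i}

/-- A subset of `X` admits a continuous section of the evaluation map
`e_X : d₀X → X`, `γ ↦ γ(1)`, where `d₀X` is the space of d-paths starting at `x₀`. -/
def CatSecSet (dX : DStruct X) (x₀ : X) (U : Set X) : Prop :=
  ∃ s : U → C(I, X), Continuous s ∧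
    ∀ u : U, s u ∈ dX.paths ∧ (s u) 0 = x₀ ∧ (s u) 1 = (u : X)

/-- The directed Lusternik–Schnirelmann category of a d-space with initial point `x₀`:
the smallest number of ENRs covering `X`, each admitting a continuous section of the
evaluation map `e_X : d₀X → X`. -/
def vcat (dX : DStruct X) (x₀ : X) : ℕ∞ :=
  sInf {n : ℕ∞ | ∃ m : ℕ, n = (m : ℕ∞) ∧ ∃ U : Fin m → Set X,
    (∀ i, IsENRSet (U i) ∧ CatSecSet dX x₀ (U i)) ∧ ∀ x : X, ∃ i, x ∈ U i}

/-- A subset of `X × X` admits a continuous section of the free path space fibration. -/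
def SecSet (X : Type*) [TopologicalSpace X] (U : Set (X × X)) : Prop :=
  ∃ s : U → C(I, X), Continuous s ∧ ∀ u : U, (s u) 0 = u.1.1 ∧ (s u) 1 = u.1.2

/-- The (Farber) topological complexity of a space, unnormalized convention. -/
def farberTC (X : Type*) [TopologicalSpace X] : ℕ∞ :=
  sInf {n : ℕ∞ | ∃ m : ℕ, n = (m : ℕ∞) ∧ ∃ U : Fin m → Set (X × X),
    (∀ i, IsOpen (U i) ∧ SecSet X (U i)) ∧ ∀ q : X × X, ∃ i, q ∈ U i}

/-- The inclusion of a subset `U ⊆ X` is nullhomotopic. -/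
def NullhomotopicIncl {Z : Type*} [TopologicalSpace Z] (U : Set Z) : Prop :=
  ∃ z₀ : Z, ContinuousMap.Homotopic
    (⟨Subtype.val, continuous_subtype_val⟩ : C(U, Z)) (ContinuousMap.const U z₀)

/-- The Lusternik–Schnirelmann category, unnormalized convention (`cat(point) = 1`). -/
def cat (X : Type*) [TopologicalSpace X] : ℕ∞ :=
  sInf {n : ℕ∞ | ∃ m : ℕ, n = (m : ℕ∞) ∧ ∃ U : Fin m → Set X,
    (∀ i, IsOpen (U i) ∧ NullhomotopicIncl (U i)) ∧ ∀ x : X, ∃ i, x ∈ U i}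

/-- A continuous map is a d-map if it takes d-paths to d-paths. -/
def IsDMap (dX : DStruct X) (dY : DStruct Y) (f : C(X, Y)) : Prop :=
  ∀ γ ∈ dX.paths, f.comp γ ∈ dY.paths

/-- A d-homotopy from `f` to `g`: a continuous homotopy all of whose traces
`t ↦ H(x,t)` are d-paths in the target. -/
def IsDHomotopy (dY : DStruct Y) (f g : C(X, Y)) (H : C(X × I, Y)) : Prop :=
  (∀ x, H (x, 0) = f x) ∧ (∀ x, H (x, 1) = g x) ∧
    ∀ x : X, H.comp ((ContinuousMap.const I x).prodMk (ContinuousMap.id I)) ∈ dY.paths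

/-- Two d-maps are d-homotopic (from `f` to `g`). -/
def DHomotopic (dY : DStruct Y) (f g : C(X, Y)) : Prop :=
  ∃ H : C(X × I, Y), IsDHomotopy dY f g H

/-- A basic dihomotopy equivalence between d-spaces:
d-homotopy inverse d-maps `f, g` together with continuously graded maps `F, G` on the
directed path spaces such that the induced maps on spaces of d-paths between fixed
endpoints are homotopy equivalences. -/
structure BasicDihomotopyEquiv {X : Type*} {Y : Type*} [TopologicalSpace X]
    [TopologicalSpace Y] (dX : DStruct X) (dY : DStruct Y) where
  f : C(X, Y)
  g : C(Y, X)
  f_dmap : IsDMap dX dY f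
  g_dmap : IsDMap dY dX g
  gf_htpy : DHomotopic dX (g.comp f) (ContinuousMap.id X)
  fg_htpy : DHomotopic dY (f.comp g) (ContinuousMap.id Y)
  F : X → X → C(I, Y) → C(I, X)
  F_grade : ∀ x x', (x, x') ∈ dGamma dX →
    ∀ γ ∈ dBetween dY (f x) (f x'), F x x' γ ∈ dBetween dX x x'
  F_cont : Continuous fun q : {q : (X × X) × C(I, Y) //
      q.1 ∈ dGamma dX ∧ q.2 ∈ dBetween dY (f q.1.1) (f q.1.2)} =>
    F q.1.1.1 q.1.1.2 q.1.2
  f_equiv : ∀ x x', (x, x') ∈ dGamma dX →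
    ∃ (Φ : C(↥(dBetween dX x x'), ↥(dBetween dY (f x) (f x'))))
      (Ψ : C(↥(dBetween dY (f x) (f x')), ↥(dBetween dX x x'))),
      (∀ γ, (Φ γ : C(I, Y)) = f.comp (γ : C(I, X))) ∧
      (∀ δ, (Ψ δ : C(I, X)) = F x x' (δ : C(I, Y))) ∧
      (Ψ.comp Φ).Homotopic (ContinuousMap.id _) ∧ (Φ.comp Ψ).Homotopic (ContinuousMap.id _)
  G : Y → Y → C(I, X) → C(I, Y)
  G_grade : ∀ y y', (y, y') ∈ dGamma dY →
    ∀ γ ∈ dBetween dX (g y) (g y'), G y y' γ ∈ dBetween dY y y'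
  G_cont : Continuous fun q : {q : (Y × Y) × C(I, X) //
      q.1 ∈ dGamma dY ∧ q.2 ∈ dBetween dX (g q.1.1) (g q.1.2)} =>
    G q.1.1.1 q.1.1.2 q.1.2
  g_equiv : ∀ y y', (y, y') ∈ dGamma dY →
    ∃ (Φ : C(↥(dBetween dY y y'), ↥(dBetween dX (g y) (g y'))))
      (Ψ : C(↥(dBetween dX (g y) (g y')), ↥(dBetween dY y y'))),
      (∀ γ, (Φ γ : C(I, X)) = g.comp (γ : C(I, Y))) ∧
      (∀ δ, (Ψ δ : C(I, Y)) = G y y' (δ : C(I, X))) ∧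
      (Ψ.comp Φ).Homotopic (ContinuousMap.id _) ∧ (Φ.comp Ψ).Homotopic (ContinuousMap.id _)

/-- The one-point d-space. -/
def unitD : DStruct Unit where
  paths := Set.univ
  const_mem := fun _ => trivial
  concat_mem := fun _ _ _ _ _ => trivial
  reparam_mem := fun _ _ _ _ => trivial

/-- A d-space is dicontractible if it is basic dihomotopy equivalent to a point. -/
def Dicontractible (dX : DStruct X) : Prop := Nonempty (BasicDihomotopyEquiv dX unitD)

/-- Product d-structure: paths whose coordinate projections are d-paths. -/
def DStruct.prod (dX : DStruct X) (dY : DStruct Y) : DStruct (X × Y) where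
  paths := {γ | ContinuousMap.fst.comp γ ∈ dX.paths ∧ ContinuousMap.snd.comp γ ∈ dY.paths}
  const_mem x := by
    constructor
    · have : (ContinuousMap.fst.comp (ContinuousMap.const I x) : C(I, X)) =
        ContinuousMap.const I x.1 := by ext t; rfl
      rw [this]; exact dX.const_mem x.1
    · have : (ContinuousMap.snd.comp (ContinuousMap.const I x) : C(I, Y)) =
        ContinuousMap.const I x.2 := by ext t; rfl
      rw [this]; exact dY.const_mem x.2
  concat_mem γ hγ δ hδ h := by
    constructor
    · rw [comp_concatCM]
      exact dX.concat_mem _ hγ.1 _ hδ.1 _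
    · rw [comp_concatCM]
      exact dY.concat_mem _ hγ.2 _ hδ.2 _
  reparam_mem γ hγ φ hφ := by
    constructor
    · rw [← ContinuousMap.comp_assoc]
      exact dX.reparam_mem _ hγ.1 φ hφ
    · rw [← ContinuousMap.comp_assoc]
      exact dY.reparam_mem _ hγ.2 φ hφ

/-- The continuous inclusion of a subset. -/
def inclCM {Z : Type*} [TopologicalSpace Z] (A : Set Z) : C(↥A, Z) :=
  ⟨Subtype.val, continuous_subtype_val⟩

/-- The d-structure induced on a subspace. -/
def DStruct.restrict (dX : DStruct X) (A : Set X) : DStruct ↥A where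
  paths := {γ | (inclCM A).comp γ ∈ dX.paths}
  const_mem x := by
    have : ((inclCM A).comp (ContinuousMap.const I x) : C(I, X)) =
        ContinuousMap.const I (x : X) := by ext t; rfl
    simpa [Set.mem_setOf_eq, this] using dX.const_mem (x : X)
  concat_mem γ hγ δ hδ h := by
    show (inclCM A).comp _ ∈ dX.paths
    rw [comp_concatCM]
    exact dX.concat_mem _ hγ _ hδ _
  reparam_mem γ hγ φ hφ := by
    show (inclCM A).comp _ ∈ dX.paths
    rw [← ContinuousMap.comp_assoc]
    exact dX.reparam_mem _ hγ φ hφ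

/-- The directed interval `I⃗`: the unit interval with non-decreasing paths. -/
def dInterval : DStruct I where
  paths := {γ | Monotone ⇑γ}
  const_mem x := monotone_const
  concat_mem γ hγ δ hδ h := monotone_concatCM h hγ hδ
  reparam_mem γ hγ φ hφ := hγ.comp hφ

/-- The directed homotopy lifting property of a d-map with respect to every d-space:
a d-fibration. -/
def IsDFibration {E B : Type*} [TopologicalSpace E] [TopologicalSpace B]
    (dE : DStruct E) (dB : DStruct B) (p : C(E, B)) : Prop :=
  IsDMap dE dB p ∧
  ∀ (X : Type) (_ : TopologicalSpace X) (dX : DStruct X) (f : C(X, E)) (φ : C(X × I, B)),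
    IsDMap dX dE f → IsDMap (dX.prod dInterval) dB φ →
    ∀ α : I, (α = 0 ∨ α = 1) → (∀ x, φ (x, α) = p (f x)) →
    ∃ φ' : C(X × I, E), IsDMap (dX.prod dInterval) dE φ' ∧
      (∀ q, p (φ' q) = φ q) ∧ ∀ x, φ' (x, α) = f x

/-- The (Hurewicz) homotopy lifting property with respect to every space: a fibration. -/
def IsFibration {E B : Type*} [TopologicalSpace E] [TopologicalSpace B] (p : C(E, B)) : Prop :=
  ∀ (X : Type) (_ : TopologicalSpace X) (f : C(X, E)) (φ : C(X × I, B)),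
    (∀ x, φ (x, 0) = p (f x)) →
    ∃ φ' : C(X × I, E), (∀ q, p (φ' q) = φ q) ∧ ∀ x, φ' (x, 0) = f x

section Parametrized

variable {E B : Type*} [TopologicalSpace E] [TopologicalSpace B]

/-- The fibre product `E ×_B E`. -/
def EBE (p : C(E, B)) : Set (E × E) := {q | p q.1 = p q.2}

/-- The space `dE_B` of d-paths in `E` lying in a single fibre of `p`. -/
def dEB (dE : DStruct E) (p : C(E, B)) : Set C(I, E) :=
  {γ | γ ∈ dE.paths ∧ ∃ b : B, ∀ t, p (γ t) = b}

/-- The set `Γ_{E,B}` of endpoint pairs of d-paths lying in a single fibre. -/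
def GammaEB (dE : DStruct E) (p : C(E, B)) : Set (E × E) :=
  {q | ∃ γ ∈ dEB dE p, γ 0 = q.1 ∧ γ 1 = q.2}

/-- A subset of `E × E` admits a continuous section of the directed parametrized endpoint
map `Π⃗ : dE_B → Γ_{E,B}`. -/
def DParamSecSet (dE : DStruct E) (p : C(E, B)) (U : Set (E × E)) : Prop :=
  ∃ s : U → C(I, E), Continuous s ∧
    ∀ u : U, s u ∈ dEB dE p ∧ (s u) 0 = u.1.1 ∧ (s u) 1 = u.1.2

/-- The directed parametrized topological complexity of a d-fibration `p : E → B`: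
the smallest number of ENRs covering `Γ_{E,B}`, each admitting a continuous section of
the directed parametrized endpoint map. -/
def vTCp (dE : DStruct E) (p : C(E, B)) : ℕ∞ :=
  sInf {n : ℕ∞ | ∃ m : ℕ, n = (m : ℕ∞) ∧ ∃ U : Fin m → Set (E × E),
    (∀ i, IsENRSet (U i) ∧ DParamSecSet dE p (U i)) ∧ GammaEB dE p ⊆ ⋃ i, U i}

/-- A subset of `E × E` admits a continuous section of the parametrized endpoint map
`Π : E^I_B → E ×_B E`. -/
def ParamSecSet (p : C(E, B)) (U : Set (E × E)) : Prop :=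
  ∃ s : U → C(I, E), Continuous s ∧
    ∀ u : U, (∃ b : B, ∀ t, p ((s u) t) = b) ∧ (s u) 0 = u.1.1 ∧ (s u) 1 = u.1.2

/-- The parametrized topological complexity of a fibration `p : E → B` (Cohen–Farber–
Weinberger): the smallest number of relatively open subsets covering `E ×_B E`, each
admitting a continuous section of the parametrized endpoint map. -/
def TCparam (p : C(E, B)) : ℕ∞ :=
  sInf {n : ℕ∞ | ∃ m : ℕ, n = (m : ℕ∞) ∧ ∃ U : Fin m → Set (E × E),
    (∀ i, U i ⊆ EBE p ∧ IsOpen (Subtype.val ⁻¹' (U i) : Set ↥(EBE p)) ∧ ParamSecSet p (U i)) ∧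
    EBE p ⊆ ⋃ i, U i}

/-- The restriction of `p : E → B` to the preimage of a subset `B' ⊆ B`. -/
def restrictMap (p : C(E, B)) (B' : Set B) : C(↥(p ⁻¹' B'), ↥B') :=
  ⟨fun e => ⟨p e, e.2⟩, by fun_prop⟩

/-- The d-structure `dE_B` on `E` formed by the fibrewise d-paths. -/
def dEBStruct (dE : DStruct E) (p : C(E, B)) : DStruct E where
  paths := dEB dE p
  const_mem x := ⟨dE.const_mem x, ⟨p x, fun _ => rfl⟩⟩
  concat_mem γ hγ δ hδ h := by
    obtain ⟨b, hb⟩ := hγ.2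
    obtain ⟨b', hb'⟩ := hδ.2
    have hbb' : b = b' := by rw [← hb 1, ← hb' 0, h]
    refine ⟨dE.concat_mem _ hγ.1 _ hδ.1 _, ⟨b, fun t => ?_⟩⟩
    rw [concatCM_apply]
    split_ifs
    · exact hb _
    · rw [hbb']; exact hb' _
  reparam_mem γ hγ φ hφ := by
    obtain ⟨b, hb⟩ := hγ.2
    exact ⟨dE.reparam_mem _ hγ.1 φ hφ, ⟨b, fun t => hb (φ t)⟩⟩

/-- The d-structure on the total space associated to a d-structure on the base of a
fibration: a path is directed iff its projection is directed. -/
def assocDStruct (dB : DStruct B) (p : C(E, B)) : DStruct E where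
  paths := {γ | p.comp γ ∈ dB.paths}
  const_mem x := by
    have : (p.comp (ContinuousMap.const I x) : C(I, B)) = ContinuousMap.const I (p x) := by
      ext t; rfl
    simpa [Set.mem_setOf_eq, this] using dB.const_mem (p x)
  concat_mem γ hγ δ hδ h := by
    show p.comp _ ∈ dB.paths
    rw [comp_concatCM]
    exact dB.concat_mem _ hγ _ hδ _
  reparam_mem γ hγ φ hφ := by
    show p.comp _ ∈ dB.paths
    rw [← ContinuousMap.comp_assoc]
    exact dB.reparam_mem _ hγ φ hφ

/-- A d-fibration is d-regular if `Γ_{E,B}` admits a partition realizing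
`vTC[p : E → B]` into pairwise disjoint ENRs with continuous sections whose initial
unions are closed. -/
def IsRegularDFib (dE : DStruct E) (p : C(E, B)) : Prop :=
  ∃ n : ℕ, vTCp dE p = (n : ℕ∞) ∧ ∃ A : Fin n → Set (E × E),
    (∀ i, IsENRSet (A i) ∧ DParamSecSet dE p (A i)) ∧
    (⋃ i, A i) = GammaEB dE p ∧
    (Pairwise fun i j => Disjoint (A i) (A j)) ∧
    ∀ r : Fin n, IsClosed (Subtype.val ⁻¹' (⋃ i, ⋃ (_ : i ≤ r), A i) : Set ↥(GammaEB dE p))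

end Parametrized

/-- A d-space is regular if `Γ_X` admits a partition realizing `vTC(X)` into pairwise
disjoint ENRs with continuous sections whose initial unions are closed. -/
def IsRegularDSpace (dX : DStruct X) : Prop :=
  ∃ n : ℕ, vTC dX = (n : ℕ∞) ∧ ∃ A : Fin n → Set (X × X),
    (∀ i, IsENRSet (A i) ∧ DSecSet dX (A i)) ∧
    (⋃ i, A i) = dGamma dX ∧
    (Pairwise fun i j => Disjoint (A i) (A j)) ∧
    ∀ r : Fin n, IsClosed (Subtype.val ⁻¹' (⋃ i, ⋃ (_ : i ≤ r), A i) : Set ↥(dGamma dX))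

/-- The monotone d-structure on a subset of a (pre)ordered topological space: directed
paths are the paths that are non-decreasing (in each coordinate, for a pi-type order). -/
def monoDStruct {Z : Type*} [TopologicalSpace Z] [Preorder Z] (A : Set Z) : DStruct ↥A where
  paths := {γ | Monotone fun t => ((γ t : Z))}
  const_mem x := fun _ _ _ => le_rfl
  concat_mem γ hγ δ hδ h := by
    have h' : (inclCM A).comp γ 1 = (inclCM A).comp δ 0 := by
      simp [inclCM, h]
    have : Monotone ⇑(concatCM ((inclCM A).comp γ) ((inclCM A).comp δ) h') :=
      monotone_concatCM h' hγ hδ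
    have hcomp := comp_concatCM (inclCM A) γ δ h
    intro s t hst
    have := this hst
    rwa [← hcomp, ContinuousMap.comp_apply, ContinuousMap.comp_apply] at this
  reparam_mem γ hγ φ hφ := hγ.comp hφ

end

section AuxPath

variable {X' : Type*} [TopologicalSpace X'] {S : Type*} [TopologicalSpace S]

private lemma continuous_of_uncurry (f : S → C(I, X')) (F : C(S × I, X'))
    (hF : ∀ s t, F (s, t) = f s t) : Continuous f := by
  have h : f = fun s => F.curry s := by
    funext s; ext t; rw [ContinuousMap.curry_apply, hF]
  rw [h]
  exact F.curry.continuous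

private lemma pj_coe (t : I) : Set.projIcc (0:ℝ) 1 zero_le_one (t:ℝ) = t := by
  rw [Set.projIcc_of_mem zero_le_one t.2]

private lemma exists_glue (u w : S → C(I, X')) (hu : Continuous u) (hw : Continuous w)
    (h : ∀ s, u s 1 = w s 0) :
    ∃ g : S → C(I, X'), Continuous g ∧ (∀ s, g s 0 = u s 0) ∧ (∀ s, g s 1 = w s 1) := by
  classical
  set pj : ℝ → I := Set.projIcc (0:ℝ) 1 zero_le_one with hpjdef
  have hpjc : Continuous pj := continuous_projIcc
  have hc2 : Continuous fun p : S × I => (p.2 : ℝ) :=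
    continuous_subtype_val.comp continuous_snd
  have pjc : ∀ t : I, pj ((t : ℝ)) = t := fun t => by
    rw [hpjdef]; exact pj_coe t
  set φ : S × I → X' := fun p =>
    if (p.2 : ℝ) ≤ 1/2 then u p.1 (pj (2 * (p.2:ℝ))) else w p.1 (pj (2 * (p.2:ℝ) - 1)) with hφdef
  have hφc : Continuous φ := by
    apply Continuous.if_le
    · exact continuous_eval.comp ((hu.comp continuous_fst).prodMk
        (hpjc.comp ((continuous_const.mul hc2))))
    · exact continuous_eval.comp ((hw.comp continuous_fst).prodMk
        (hpjc.comp ((continuous_const.mul hc2).sub continuous_const)))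
    · exact hc2
    · exact continuous_const
    · intro p hp
      have h1 : 2 * (p.2:ℝ) = ((1:I):ℝ) := by rw [hp]; norm_num
      have h0 : 2 * (p.2:ℝ) - 1 = ((0:I):ℝ) := by rw [hp]; norm_num
      rw [h0, h1, pjc, pjc, h p.1]
  refine ⟨fun s => (ContinuousMap.mk φ hφc).curry s, (ContinuousMap.mk φ hφc).curry.continuous, ?_, ?_⟩
  · intro s
    show φ (s, 0) = u s 0
    have h0 : (2:ℝ) * ((0:I):ℝ) = ((0:I):ℝ) := by norm_num
    simp only [hφdef]
    rw [if_pos (by norm_num), h0, pjc]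
  · intro s
    show φ (s, 1) = w s 1
    have h1 : (2:ℝ) * ((1:I):ℝ) - 1 = ((1:I):ℝ) := by norm_num
    simp only [hφdef]
    rw [if_neg (by norm_num), h1, pjc]

private lemma exists_rev (u : S → C(I, X')) (hu : Continuous u) :
    ∃ g : S → C(I, X'), Continuous g ∧ (∀ s, g s 0 = u s 1) ∧ (∀ s, g s 1 = u s 0) := by
  set φ : S × I → X' := fun p => u p.1 (unitInterval.symm p.2) with hφdef
  have hφc : Continuous φ :=
    continuous_eval.comp ((hu.comp continuous_fst).prodMk
      (unitInterval.continuous_symm.comp continuous_snd))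
  refine ⟨fun s => (ContinuousMap.mk φ hφc).curry s, (ContinuousMap.mk φ hφc).curry.continuous, ?_, ?_⟩
  · intro s; show φ (s, 0) = u s 1; simp [hφdef]
  · intro s; show φ (s, 1) = u s 0; simp [hφdef]

private lemma isOpen_forall_mem {α : Type*} [TopologicalSpace α]
    {F : S × I → α} (hF : Continuous F) {O : Set α} (hO : IsOpen O) :
    IsOpen {s : S | ∀ t : I, F (s, t) ∈ O} := by
  rw [← isClosed_compl_iff]
  have h : {s : S | ∀ t : I, F (s, t) ∈ O}ᶜ = Prod.fst '' (F ⁻¹' Oᶜ) := by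
    ext s
    simp only [Set.mem_compl_iff, Set.mem_setOf_eq, not_forall, Set.mem_image,
      Set.mem_preimage, Prod.exists]
    constructor
    · rintro ⟨t, ht⟩; exact ⟨s, t, ht, rfl⟩
    · rintro ⟨s', t, ht, rfl⟩; exact ⟨t, ht⟩
  rw [h]
  exact isClosedMap_fst_of_compactSpace _ ((hO.isClosed_compl).preimage hF)

end AuxPath


section AuxENR


private lemma enr_exists_open_isClosed {Z : Type*} [TopologicalSpace Z] [T2Space Z]
    (S : Set Z) (hS : IsENRSet S) :
    ∃ V : Set Z, IsOpen V ∧ S ⊆ V ∧ V ∩ closure S ⊆ S := by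
  obtain ⟨N, e, he, U, hUo, hUr, r, hrc, hfix⟩ := hS
  have key : ∀ x : ↥S, ∃ O : Set Z, IsOpen O ∧ (x : Z) ∈ O ∧ O ∩ closure S ⊆ S := by
    intro x
    have hexU : e x ∈ U := hUr (Set.mem_range_self x)
    obtain ⟨ε, hε, hball⟩ := (Metric.nhds_basis_closedBall.mem_iff).1 (hUo.mem_nhds hexU)
    set cB := Metric.closedBall (e x) ε with hcB
    haveI : CompactSpace ↥cB := isCompact_iff_compactSpace.1 (isCompact_closedBall _ _)
    set ψ : ↥cB → Fin N → ℝ := fun b => e (r ⟨(b : Fin N → ℝ), hball b.2⟩) with hψ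
    have hψc : Continuous ψ :=
      he.continuous.comp (hrc.comp (Continuous.subtype_mk continuous_subtype_val _))
    set F : Set ↥cB := {b | ψ b = (b : Fin N → ℝ)} with hF
    have hFc : IsClosed F := isClosed_eq hψc continuous_subtype_val
    have hFcomp : IsCompact (Subtype.val '' F) := hFc.isCompact.image continuous_subtype_val
    have himg : Subtype.val '' F = cB ∩ Set.range e := by
      ext v
      constructor
      · rintro ⟨b, hb, rfl⟩
        exact ⟨b.2, ⟨r ⟨(b : Fin N → ℝ), hball b.2⟩, hb⟩⟩
      · rintro ⟨hvB, a, rfl⟩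
        refine ⟨⟨e a, hvB⟩, ?_, rfl⟩
        show e (r ⟨e a, hball hvB⟩) = e a
        rw [hfix a (hball hvB)]
    have hKpre : IsCompact (e ⁻¹' cB) := by
      rw [he.isCompact_iff, Set.image_preimage_eq_inter_range, ← himg]
      exact hFcomp
    set K : Set Z := Subtype.val '' (e ⁻¹' cB) with hK
    have hKS : K ⊆ S := by rintro z ⟨b, _, rfl⟩; exact b.2
    have hKcl : IsClosed K := (hKpre.image continuous_subtype_val).isClosed
    have hopen : IsOpen (e ⁻¹' Metric.ball (e x) ε) := Metric.isOpen_ball.preimage he.continuous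
    obtain ⟨O, hOo, hOeq⟩ := isOpen_induced_iff.1 hopen
    refine ⟨O, hOo, ?_, ?_⟩
    · have hx : x ∈ e ⁻¹' Metric.ball (e x) ε := by
        simp only [Set.mem_preimage, Metric.mem_ball, dist_self]; exact hε
      rw [← hOeq] at hx; exact hx
    · have hOS : O ∩ S ⊆ K := by
        rintro z ⟨hzO, hzS⟩
        have hz : (⟨z, hzS⟩ : ↥S) ∈ e ⁻¹' Metric.ball (e x) ε := by rw [← hOeq]; exact hzO
        exact ⟨⟨z, hzS⟩, Metric.ball_subset_closedBall hz, rfl⟩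
      calc O ∩ closure S ⊆ closure (O ∩ S) := hOo.inter_closure
        _ ⊆ closure K := closure_mono hOS
        _ = K := hKcl.closure_eq
        _ ⊆ S := hKS
  choose O hOo hOx hOs using key
  refine ⟨⋃ x, O x, isOpen_iUnion hOo, ?_, ?_⟩
  · intro z hz; exact Set.mem_iUnion.2 ⟨⟨z, hz⟩, hOx _⟩
  · rintro z ⟨hzU, hzc⟩
    obtain ⟨x, hx⟩ := Set.mem_iUnion.1 hzU
    exact hOs x ⟨hx, hzc⟩

private lemma isENR_metrizableSpace {Y : Type*} [TopologicalSpace Y] (h : IsENR Y) :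
    TopologicalSpace.MetrizableSpace Y := by
  obtain ⟨N, e, he, -⟩ := h
  exact he.metrizableSpace

end AuxENR

section Thicken


private lemma thicken_section {X : Type*} [TopologicalSpace X] (hX : IsENR X)
    (S : Set (X × X)) (hS : IsENRSet S) (s : ↥S → C(I, X)) (hs : Continuous s)
    (hse : ∀ u : ↥S, s u 0 = u.1.1 ∧ s u 1 = u.1.2) :
    ∃ W : Set (X × X), IsOpen W ∧ S ⊆ W ∧ SecSet X W := by
  classical
  haveI : TopologicalSpace.MetrizableSpace X := isENR_metrizableSpace hX
  obtain ⟨N, e, he, U, hUo, hUr, ρ, hρc, hρfix⟩ := hX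
  obtain ⟨V₀, hV₀o, hSV₀, hV₀c⟩ := enr_exists_open_isClosed S hS
  haveI : NormalSpace ↥V₀ := by
    letI := TopologicalSpace.metrizableSpaceMetric ↥V₀
    infer_instance
  set SV : Set ↥V₀ := Subtype.val ⁻¹' S with hSVdef
  have hSVc : IsClosed SV := by
    have h : SV = Subtype.val ⁻¹' closure S := by
      ext v
      exact ⟨fun hv => subset_closure hv, fun hv => hV₀c ⟨v.2, hv⟩⟩
    rw [h]
    exact isClosed_closure.preimage continuous_subtype_val
  obtain ⟨M, eS, heS, US, hUSo, hUSr, ρS, hρSc, hρSfix⟩ := hS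
  set f : C(↥SV, Fin M → ℝ) := ⟨fun v => eS ⟨(v : ↥V₀).1, v.2⟩,
    heS.continuous.comp (Continuous.subtype_mk
      (continuous_subtype_val.comp continuous_subtype_val) _)⟩ with hfdef
  obtain ⟨g, hg⟩ := f.exists_restrict_eq hSVc
  have hg' : ∀ v : ↥SV, g (v : ↥V₀) = eS ⟨(v : ↥V₀).1, v.2⟩ := by
    intro v
    have h := DFunLike.congr_fun hg v
    simpa [hfdef] using h
  set W₁ : Set (X × X) := Subtype.val '' (⇑g ⁻¹' US) with hW₁def
  have hW₁o : IsOpen W₁ := hV₀o.isOpenMap_subtype_val _ (hUSo.preimage g.continuous)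
  have hSW₁ : S ⊆ W₁ := by
    intro z hz
    refine ⟨⟨z, hSV₀ hz⟩, ?_, rfl⟩
    show g ⟨z, hSV₀ hz⟩ ∈ US
    have h := hg' ⟨⟨z, hSV₀ hz⟩, hz⟩
    rw [h]
    exact hUSr (Set.mem_range_self _)
  have hW₁V₀ : W₁ ⊆ V₀ := by rintro z ⟨v, _, rfl⟩; exact v.2
  set jV : ↥W₁ → ↥V₀ := fun w => ⟨(w : X × X), hW₁V₀ w.2⟩ with hjVdef
  have hjVc : Continuous jV := Continuous.subtype_mk continuous_subtype_val _
  have hgUS : ∀ w : ↥W₁, g (jV w) ∈ US := by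
    rintro ⟨z, hz⟩
    obtain ⟨v, hv, hvz⟩ := hz
    have h : jV ⟨z, ⟨v, hv, hvz⟩⟩ = v := Subtype.ext hvz.symm
    rw [h]; exact hv
  set r : ↥W₁ → ↥S := fun w => ρS ⟨g (jV w), hgUS w⟩ with hrdef
  have hrc : Continuous r := hρSc.comp (Continuous.subtype_mk (g.continuous.comp hjVc) _)
  have hrfix : ∀ w : ↥W₁, (w : X × X) ∈ S → ((r w : ↥S) : X × X) = (w : X × X) := by
    intro w hw
    have h1 : g (jV w) = eS ⟨(w : X × X), hw⟩ := hg' ⟨jV w, hw⟩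
    show ((ρS ⟨g (jV w), hgUS w⟩ : ↥S) : X × X) = (w : X × X)
    have h2 : (⟨g (jV w), hgUS w⟩ : ↥US) = ⟨eS ⟨(w : X × X), hw⟩, h1 ▸ hgUS w⟩ :=
      Subtype.ext h1
    rw [h2, hρSfix ⟨(w : X × X), hw⟩]
  -- straight-line segments retracted by ρ
  set sg : (Fin N → ℝ) → (Fin N → ℝ) → I → (Fin N → ℝ) :=
    fun a b t => (1 - (t : ℝ)) • a + (t : ℝ) • b with hsgdef
  have hsg0 : ∀ a b, sg a b 0 = a := by intro a b; simp [hsgdef]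
  have hsg1 : ∀ a b, sg a b 1 = b := by intro a b; simp [hsgdef]
  have hsgself : ∀ a t, sg a a t = a := by
    intro a t
    rw [hsgdef]
    dsimp only
    rw [← add_smul]
    norm_num
  set c₁ : ↥W₁ → X := fun w => (w : X × X).1 with hc₁def
  set c₂ : ↥W₁ → X := fun w => (w : X × X).2 with hc₂def
  set d₁ : ↥W₁ → X := fun w => ((r w : ↥S) : X × X).1 with hd₁def
  set d₂ : ↥W₁ → X := fun w => ((r w : ↥S) : X × X).2 with hd₂def
  have hc₁ : Continuous c₁ := continuous_fst.comp continuous_subtype_val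
  have hc₂ : Continuous c₂ := continuous_snd.comp continuous_subtype_val
  have hd₁ : Continuous d₁ := continuous_fst.comp (continuous_subtype_val.comp hrc)
  have hd₂ : Continuous d₂ := continuous_snd.comp (continuous_subtype_val.comp hrc)
  have hcoe : Continuous fun p : ↥W₁ × I => ((p.2 : ℝ)) :=
    continuous_subtype_val.comp continuous_snd
  have hFseg : ∀ (c d : ↥W₁ → X), Continuous c → Continuous d →
      Continuous fun p : ↥W₁ × I => sg (e (c p.1)) (e (d p.1)) p.2 := by
    intro c d hc hd
    simp only [hsgdef]
    exact ((continuous_const.sub hcoe).smul (he.continuous.comp (hc.comp continuous_fst))).add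
      (hcoe.smul (he.continuous.comp (hd.comp continuous_fst)))
  set Q : Set ↥W₁ := {w | ∀ t : I, sg (e (c₁ w)) (e (d₁ w)) t ∈ U} ∩
      {w | ∀ t : I, sg (e (c₂ w)) (e (d₂ w)) t ∈ U} with hQdef
  have hQo : IsOpen Q :=
    (isOpen_forall_mem (hFseg c₁ d₁ hc₁ hd₁) hUo).inter
      (isOpen_forall_mem (hFseg c₂ d₂ hc₂ hd₂) hUo)
  have hSQ : ∀ w : ↥W₁, (w : X × X) ∈ S → w ∈ Q := by
    intro w hw
    have h1 : d₁ w = c₁ w := by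
      rw [hd₁def, hc₁def]; exact congrArg Prod.fst (hrfix w hw)
    have h2 : d₂ w = c₂ w := by
      rw [hd₂def, hc₂def]; exact congrArg Prod.snd (hrfix w hw)
    constructor <;> intro t
    · rw [h1, hsgself]; exact hUr (Set.mem_range_self _)
    · rw [h2, hsgself]; exact hUr (Set.mem_range_self _)
  set W : Set (X × X) := Subtype.val '' Q with hWdef
  have hWo : IsOpen W := hW₁o.isOpenMap_subtype_val _ hQo
  have hSW : S ⊆ W := fun z hz => ⟨⟨z, hSW₁ hz⟩, hSQ _ hz, rfl⟩
  have hWW₁ : W ⊆ W₁ := by rintro z ⟨w, _, rfl⟩; exact w.2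
  set jW : ↥W → ↥W₁ := fun w => ⟨(w : X × X), hWW₁ w.2⟩ with hjWdef
  have hjWc : Continuous jW := Continuous.subtype_mk continuous_subtype_val _
  have hjWQ : ∀ w : ↥W, jW w ∈ Q := by
    rintro ⟨z, hz⟩
    obtain ⟨w', hw', hwz⟩ := hz
    have h : jW ⟨z, ⟨w', hw', hwz⟩⟩ = w' := Subtype.ext hwz.symm
    rw [h]; exact hw'
  -- first coordinate path: from w.1 to (r w).1
  set F₁ : ↥W × I → X := fun p =>
    ρ ⟨sg (e (c₁ (jW p.1))) (e (d₁ (jW p.1))) p.2, (hjWQ p.1).1 p.2⟩ with hF₁def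
  have hF₁c : Continuous F₁ := hρc.comp (Continuous.subtype_mk
    ((hFseg c₁ d₁ hc₁ hd₁).comp ((hjWc.comp continuous_fst).prodMk continuous_snd)) _)
  set p₁ : ↥W → C(I, X) := fun w => (ContinuousMap.mk F₁ hF₁c).curry w with hp₁def
  have hp₁c : Continuous p₁ := (ContinuousMap.mk F₁ hF₁c).curry.continuous
  have hp₁0 : ∀ w : ↥W, p₁ w 0 = (w : X × X).1 := by
    intro w
    show F₁ (w, 0) = (w : X × X).1
    rw [hF₁def]
    dsimp only
    have h : (⟨sg (e (c₁ (jW w))) (e (d₁ (jW w))) 0, (hjWQ w).1 0⟩ : ↥U) =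
        ⟨e (c₁ (jW w)), hUr (Set.mem_range_self _)⟩ := Subtype.ext (hsg0 _ _)
    rw [h, hρfix]
  have hp₁1 : ∀ w : ↥W, p₁ w 1 = ((r (jW w) : ↥S) : X × X).1 := by
    intro w
    show F₁ (w, 1) = _
    rw [hF₁def]
    dsimp only
    have h : (⟨sg (e (c₁ (jW w))) (e (d₁ (jW w))) 1, (hjWQ w).1 1⟩ : ↥U) =
        ⟨e (d₁ (jW w)), hUr (Set.mem_range_self _)⟩ := Subtype.ext (hsg1 _ _)
    rw [h, hρfix]
  -- second coordinate path: from w.2 to (r w).2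
  set F₂ : ↥W × I → X := fun p =>
    ρ ⟨sg (e (c₂ (jW p.1))) (e (d₂ (jW p.1))) p.2, (hjWQ p.1).2 p.2⟩ with hF₂def
  have hF₂c : Continuous F₂ := hρc.comp (Continuous.subtype_mk
    ((hFseg c₂ d₂ hc₂ hd₂).comp ((hjWc.comp continuous_fst).prodMk continuous_snd)) _)
  set p₂ : ↥W → C(I, X) := fun w => (ContinuousMap.mk F₂ hF₂c).curry w with hp₂def
  have hp₂c : Continuous p₂ := (ContinuousMap.mk F₂ hF₂c).curry.continuous
  have hp₂0 : ∀ w : ↥W, p₂ w 0 = (w : X × X).2 := by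
    intro w
    show F₂ (w, 0) = (w : X × X).2
    rw [hF₂def]
    dsimp only
    have h : (⟨sg (e (c₂ (jW w))) (e (d₂ (jW w))) 0, (hjWQ w).2 0⟩ : ↥U) =
        ⟨e (c₂ (jW w)), hUr (Set.mem_range_self _)⟩ := Subtype.ext (hsg0 _ _)
    rw [h, hρfix]
  have hp₂1 : ∀ w : ↥W, p₂ w 1 = ((r (jW w) : ↥S) : X × X).2 := by
    intro w
    show F₂ (w, 1) = _
    rw [hF₂def]
    dsimp only
    have h : (⟨sg (e (c₂ (jW w))) (e (d₂ (jW w))) 1, (hjWQ w).2 1⟩ : ↥U) =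
        ⟨e (d₂ (jW w)), hUr (Set.mem_range_self _)⟩ := Subtype.ext (hsg1 _ _)
    rw [h, hρfix]
  -- middle path: the given section at r (jW w)
  set mid : ↥W → C(I, X) := fun w => s (r (jW w)) with hmiddef
  have hmidc : Continuous mid := hs.comp (hrc.comp hjWc)
  obtain ⟨q₁, hq₁c, hq₁0, hq₁1⟩ := exists_glue p₁ mid hp₁c hmidc
    (fun w => by rw [hp₁1 w, hmiddef]; exact ((hse (r (jW w))).1).symm)
  obtain ⟨q₂, hq₂c, hq₂0, hq₂1⟩ := exists_rev p₂ hp₂c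
  obtain ⟨gfin, hgfinc, hgfin0, hgfin1⟩ := exists_glue q₁ q₂ hq₁c hq₂c
    (fun w => by rw [hq₁1 w, hq₂0 w, hmiddef, hp₂1 w]; exact (hse (r (jW w))).2)
  refine ⟨W, hWo, hSW, gfin, hgfinc, fun u => ⟨?_, ?_⟩⟩
  · rw [hgfin0 u, hq₁0 u, hp₁0 u]
  · rw [hgfin1 u, hq₂1 u, hp₂0 u]

end Thicken

section Comb


private lemma disjoint_open_nbhds {Z : Type*} [TopologicalSpace Z] [NormalSpace Z]
    {ι : Type*} [Finite ι] (K : ι → Set Z) (hc : ∀ i, IsClosed (K i))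
    (hd : Pairwise fun i j => Disjoint (K i) (K j)) :
    ∃ G : ι → Set Z, (∀ i, IsOpen (G i)) ∧ (∀ i, K i ⊆ G i) ∧
      Pairwise fun i j => Disjoint (G i) (G j) := by
  classical
  have sep : ∀ i j : ι, ∃ P : Set Z × Set Z, IsOpen P.1 ∧ IsOpen P.2 ∧ K i ⊆ P.1 ∧
      K j ⊆ P.2 ∧ (i ≠ j → Disjoint P.1 P.2) := by
    intro i j
    by_cases h : i = j
    · exact ⟨(Set.univ, Set.univ), isOpen_univ, isOpen_univ, Set.subset_univ _,
        Set.subset_univ _, fun hne => absurd h hne⟩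
    · obtain ⟨Uu, Vv, hU, hV, hKU, hKV, hUV⟩ := normal_separation (hc i) (hc j) (hd h)
      exact ⟨(Uu, Vv), hU, hV, hKU, hKV, fun _ => hUV⟩
  choose P h1 h2 h3 h4 h5 using sep
  refine ⟨fun i => ⋂ j, (P i j).1 ∩ (P j i).2, ?_, ?_, ?_⟩
  · intro i
    exact isOpen_iInter_of_finite fun j => (h1 i j).inter (h2 j i)
  · intro i z hz
    exact Set.mem_iInter.2 fun j => ⟨h3 i j hz, h4 j i hz⟩
  · intro i j hij
    have hGi : (⋂ j', (P i j').1 ∩ (P j' i).2) ⊆ (P i j).1 :=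
      (Set.iInter_subset _ j).trans Set.inter_subset_left
    have hGj : (⋂ j', (P j j').1 ∩ (P j' j).2) ⊆ (P i j).2 :=
      (Set.iInter_subset _ i).trans Set.inter_subset_right
    exact Set.disjoint_of_subset hGi hGj (h5 i j hij)

private lemma secSet_iUnion_of_disjoint {X : Type*} [TopologicalSpace X] {ι : Type*}
    (V : ι → Set (X × X)) (ho : ∀ i, IsOpen (V i))
    (hd : Pairwise fun i j => Disjoint (V i) (V j))
    (hs : ∀ i, SecSet X (V i)) : SecSet X (⋃ i, V i) := by
  classical
  choose sig hsigc hsige using hs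
  have hmem : ∀ q : ↥(⋃ i, V i), ∃ i, (q : X × X) ∈ V i := fun q => Set.mem_iUnion.1 q.2
  choose idx hidx using hmem
  refine ⟨fun q => sig (idx q) ⟨(q : X × X), hidx q⟩, ?_, ?_⟩
  · rw [continuous_iff_continuousAt]
    intro q
    have hopen : IsOpen (Subtype.val ⁻¹' V (idx q) : Set ↥(⋃ i, V i)) :=
      (ho _).preimage continuous_subtype_val
    apply ContinuousOn.continuousAt ?_ (hopen.mem_nhds (hidx q))
    rw [continuousOn_iff_continuous_restrict]
    have hres : (Set.domRestrict (Subtype.val ⁻¹' V (idx q))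
        fun q' => sig (idx q') ⟨(q' : X × X), hidx q'⟩) =
        fun q' : ↥(Subtype.val ⁻¹' V (idx q) : Set ↥(⋃ i, V i)) =>
          sig (idx q) ⟨((q' : ↥(⋃ i, V i)) : X × X), q'.2⟩ := by
      funext q'
      have hiq : idx (q' : ↥(⋃ i, V i)) = idx q := by
        by_contra hne
        exact Set.disjoint_left.mp (hd hne) (hidx (q' : ↥(⋃ i, V i))) q'.2
      simp only [Set.domRestrict_apply]
      congr 1
      exact Subtype.heq_iff_coe_eq (fun x => by rw [hiq]) |>.2 rfl
    rw [hres]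
    exact (hsigc _).comp (Continuous.subtype_mk
      (continuous_subtype_val.comp continuous_subtype_val) _)
  · intro u
    exact hsige (idx u) ⟨(u : X × X), hidx u⟩

end Comb

/-- If `X` is a regular d-space (and an ENR) with an initial point, then
`TC(X) ≤ 2 ⬝ vTC(X) − 1`. -/
theorem farberTC_le_two_mul_vTC_sub_one {X : Type*} [TopologicalSpace X] (dX : DStruct X)
    (x₀ : X) (hx₀ : IsInitialPoint dX x₀) (hX : IsENR X) (hreg : IsRegularDSpace dX) :
    farberTC X ≤ 2 * vTC dX - 1 := by
  classical
  obtain ⟨n, hvtc, A, hA, hAcover, hAdisj, hAclosed⟩ := hreg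
  haveI : TopologicalSpace.MetrizableSpace X := isENR_metrizableSpace hX
  have hn : n ≠ 0 := by
    intro h
    subst h
    have h0 := hx₀ x₀
    rw [← hAcover] at h0
    obtain ⟨i, -⟩ := Set.mem_iUnion.1 h0
    exact i.elim0
  -- thickened sections around each piece A i
  have hsecA : ∀ i, ∃ W, IsOpen W ∧ A i ⊆ W ∧ SecSet X W := by
    intro i
    obtain ⟨sA, hsAc, hsAe⟩ := (hA i).2
    exact thicken_section hX (A i) (hA i).1 sA hsAc (fun u => ⟨(hsAe u).2.1, (hsAe u).2.2⟩)
  choose W hWo hAW hWsec using hsecA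
  choose sigW hsigWc hsigWe using hWsec
  set emb : X → X × X := fun x => (x₀, x) with hemb
  have hembc : Continuous emb := Continuous.prodMk continuous_const continuous_id
  set B : Fin n → Set X := fun i => emb ⁻¹' A i with hB
  set O : Fin n → Set X := fun i => emb ⁻¹' W i with hO
  have hOo : ∀ i, IsOpen (O i) := fun i => (hWo i).preimage hembc
  have hBO : ∀ i, B i ⊆ O i := fun i x hx => hAW i hx
  have hBex : ∀ x : X, ∃ i, x ∈ B i := by
    intro x
    have h := hx₀ x
    rw [← hAcover] at h
    obtain ⟨i, hi⟩ := Set.mem_iUnion.1 h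
    exact ⟨i, hi⟩
  choose φm hφm using hBex
  have hφu : ∀ (x : X) (i : Fin n), x ∈ B i → φm x = i := by
    intro x i h
    by_contra hne
    exact Set.disjoint_left.mp (hAdisj hne) (hφm x) h
  have hD : ∀ r : Fin n, IsClosed {x : X | φm x ≤ r} := by
    intro r
    have heq : {x : X | φm x ≤ r} =
        (fun x => (⟨emb x, hx₀ x⟩ : ↥(dGamma dX))) ⁻¹'
          (Subtype.val ⁻¹' (⋃ i, ⋃ (_ : i ≤ r), A i)) := by
      ext x
      simp only [Set.mem_setOf_eq, Set.mem_preimage, Set.mem_iUnion]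
      constructor
      · intro h
        exact ⟨φm x, h, hφm x⟩
      · rintro ⟨i, hi, hx⟩
        rw [hφu x i hx]
        exact hi
    rw [heq]
    exact (hAclosed r).preimage (Continuous.subtype_mk hembc _)
  have hTlt : ∀ k : ℕ, IsClosed {q : X × X | (φm q.1 : ℕ) + (φm q.2 : ℕ) < k} := by
    intro k
    have heq : {q : X × X | (φm q.1 : ℕ) + (φm q.2 : ℕ) < k} =
        ⋃ p ∈ {p : Fin n × Fin n | (p.1 : ℕ) + (p.2 : ℕ) < k},
          {x : X | φm x ≤ p.1} ×ˢ {x : X | φm x ≤ p.2} := by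
      ext q
      simp only [Set.mem_setOf_eq, Set.mem_iUnion, Set.mem_prod, exists_prop]
      constructor
      · intro h
        exact ⟨(φm q.1, φm q.2), h, le_refl _, le_refl _⟩
      · rintro ⟨p, hp, h1, h2⟩
        have h1' : (φm q.1 : ℕ) ≤ (p.1 : ℕ) := Fin.le_def.1 h1
        have h2' : (φm q.2 : ℕ) ≤ (p.2 : ℕ) := Fin.le_def.1 h2
        omega
    rw [heq]
    exact (Set.toFinite _).isClosed_biUnion fun p _ => (hD p.1).prod (hD p.2)
  have hΩo : ∀ k : ℕ, IsOpen {q : X × X | k ≤ (φm q.1 : ℕ) + (φm q.2 : ℕ)} := by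
    intro k
    have heq : {q : X × X | k ≤ (φm q.1 : ℕ) + (φm q.2 : ℕ)} =
        {q : X × X | (φm q.1 : ℕ) + (φm q.2 : ℕ) < k}ᶜ := by
      ext q
      simp [not_lt]
    rw [heq]
    exact (hTlt k).isOpen_compl
  -- for each level k, a disjoint family of open thickenings of the pieces B i ×ˢ B j
  have hfam : ∀ k : ℕ,
      ∃ Vf : {p : Fin n × Fin n // (p.1 : ℕ) + (p.2 : ℕ) = k} → Set (X × X),
      (∀ p, IsOpen (Vf p)) ∧ (∀ p, B p.1.1 ×ˢ B p.1.2 ⊆ Vf p) ∧ (∀ p, SecSet X (Vf p)) ∧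
      Pairwise fun p p' => Disjoint (Vf p) (Vf p') := by
    intro k
    set Ω : Set (X × X) := {q | k ≤ (φm q.1 : ℕ) + (φm q.2 : ℕ)} with hΩdef
    have hΩo' : IsOpen Ω := hΩo k
    haveI : NormalSpace ↥Ω := by
      letI := TopologicalSpace.metrizableSpaceMetric ↥Ω
      infer_instance
    set K : {p : Fin n × Fin n // (p.1 : ℕ) + (p.2 : ℕ) = k} → Set ↥Ω :=
      fun p => Subtype.val ⁻¹' ({x : X | φm x ≤ p.1.1} ×ˢ {x : X | φm x ≤ p.1.2}) with hK
    have hKc : ∀ p, IsClosed (K p) :=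
      fun p => ((hD p.1.1).prod (hD p.1.2)).preimage continuous_subtype_val
    have hKd : Pairwise fun p p' => Disjoint (K p) (K p') := by
      intro p p' hne
      rw [Set.disjoint_left]
      rintro ⟨q, hq⟩ ⟨h11, h12⟩ ⟨h21, h22⟩
      have e1 : (φm q.1 : ℕ) ≤ (p.1.1 : ℕ) := Fin.le_def.1 h11
      have e2 : (φm q.2 : ℕ) ≤ (p.1.2 : ℕ) := Fin.le_def.1 h12
      have e3 : (φm q.1 : ℕ) ≤ (p'.1.1 : ℕ) := Fin.le_def.1 h21
      have e4 : (φm q.2 : ℕ) ≤ (p'.1.2 : ℕ) := Fin.le_def.1 h22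
      have hk : k ≤ (φm q.1 : ℕ) + (φm q.2 : ℕ) := hq
      have hs1 : (p.1.1 : ℕ) + (p.1.2 : ℕ) = k := p.2
      have hs2 : (p'.1.1 : ℕ) + (p'.1.2 : ℕ) = k := p'.2
      have hne' : (p.1.1 : ℕ) ≠ (p'.1.1 : ℕ) ∨ (p.1.2 : ℕ) ≠ (p'.1.2 : ℕ) := by
        by_contra h
        push_neg at h
        exact hne (Subtype.ext (Prod.ext (Fin.ext h.1) (Fin.ext h.2)))
      rcases hne' with h | h <;> omega
    obtain ⟨G, hGo, hKG, hGd⟩ := disjoint_open_nbhds K hKc hKd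
    refine ⟨fun p => (Subtype.val '' G p) ∩ (O p.1.1 ×ˢ O p.1.2), ?_, ?_, ?_, ?_⟩
    · intro p
      exact (hΩo'.isOpenMap_subtype_val _ (hGo p)).inter ((hOo _).prod (hOo _))
    · intro p q hq
      have hqΩ : q ∈ Ω := by
        show k ≤ (φm q.1 : ℕ) + (φm q.2 : ℕ)
        rw [hφu q.1 p.1.1 hq.1, hφu q.2 p.1.2 hq.2, p.2]
      refine ⟨⟨⟨q, hqΩ⟩, hKG p ⟨le_of_eq (hφu q.1 p.1.1 hq.1), le_of_eq (hφu q.2 p.1.2 hq.2)⟩, rfl⟩,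
        hBO _ hq.1, hBO _ hq.2⟩
    · intro p
      set Vp : Set (X × X) := (Subtype.val '' G p) ∩ (O p.1.1 ×ˢ O p.1.2) with hVp
      have hsub1 : ∀ q : ↥Vp, emb (q : X × X).1 ∈ W p.1.1 := fun q => q.2.2.1
      have hsub2 : ∀ q : ↥Vp, emb (q : X × X).2 ∈ W p.1.2 := fun q => q.2.2.2
      set u1 : ↥Vp → C(I, X) := fun q => sigW p.1.1 ⟨emb (q : X × X).1, hsub1 q⟩ with hu1
      set u2 : ↥Vp → C(I, X) := fun q => sigW p.1.2 ⟨emb (q : X × X).2, hsub2 q⟩ with hu2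
      have hu1c : Continuous u1 := (hsigWc _).comp (Continuous.subtype_mk
        (hembc.comp (continuous_fst.comp continuous_subtype_val)) _)
      have hu2c : Continuous u2 := (hsigWc _).comp (Continuous.subtype_mk
        (hembc.comp (continuous_snd.comp continuous_subtype_val)) _)
      obtain ⟨ru1, hru1c, hru10, hru11⟩ := exists_rev u1 hu1c
      obtain ⟨gq, hgqc, hgq0, hgq1⟩ := exists_glue ru1 u2 hru1c hu2c (fun q => by
        rw [hru11 q, hu1, hu2]
        rw [(hsigWe p.1.1 _).1, (hsigWe p.1.2 _).1])
      refine ⟨gq, hgqc, fun q => ⟨?_, ?_⟩⟩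
      · rw [hgq0 q, hru10 q, hu1, (hsigWe p.1.1 _).2]
      · rw [hgq1 q, hu2, (hsigWe p.1.2 _).2]
    · intro p p' hne
      have hdG : Disjoint (Subtype.val '' G p) (Subtype.val '' G p') :=
        Set.disjoint_image_of_injective Subtype.val_injective (hGd hne)
      exact Set.disjoint_of_subset Set.inter_subset_left Set.inter_subset_left hdG
  choose Vf hVo hVB hVsec hVdisj using hfam
  set Ucov : Fin (2 * n - 1) → Set (X × X) := fun k =>
    ⋃ p : {p : Fin n × Fin n // (p.1 : ℕ) + (p.2 : ℕ) = (k : ℕ)}, Vf (k : ℕ) p with hUcov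
  have hmem : ((2 * n - 1 : ℕ) : ℕ∞) ∈ {m : ℕ∞ | ∃ m' : ℕ, m = (m' : ℕ∞) ∧
      ∃ U : Fin m' → Set (X × X),
      (∀ i, IsOpen (U i) ∧ SecSet X (U i)) ∧ ∀ q : X × X, ∃ i, q ∈ U i} := by
    refine ⟨2 * n - 1, rfl, Ucov, fun k => ⟨?_, ?_⟩, ?_⟩
    · exact isOpen_iUnion fun p => hVo _ p
    · exact secSet_iUnion_of_disjoint _ (fun p => hVo _ p) (hVdisj _) (fun p => hVsec _ p)
    · intro q
      have hlt : (φm q.1 : ℕ) + (φm q.2 : ℕ) < 2 * n - 1 := by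
        have hq1 := (φm q.1).2
        have hq2 := (φm q.2).2
        omega
      refine ⟨⟨(φm q.1 : ℕ) + (φm q.2 : ℕ), hlt⟩, ?_⟩
      apply Set.mem_iUnion.2
      exact ⟨⟨(φm q.1, φm q.2), rfl⟩, hVB _ _ ⟨hφm q.1, hφm q.2⟩⟩
  have hfin : farberTC X ≤ ((2 * n - 1 : ℕ) : ℕ∞) := sInf_le hmem
  have harith : ((2 * n - 1 : ℕ) : ℕ∞) = 2 * (n : ℕ∞) - 1 := by
    rw [ENat.coe_sub]
    norm_num
  rw [hvtc]
  rw [harith] at hfin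
  exact hfin
end

section
/- Let p : E → B and p' : E' → B' be regular d-fibrations (with all spaces ENRs). Then the product d-fibration p × p' : E × E' → B × B' satisfies vTC[p × p' : E × E' → B × B'] ≤ vTC[p : E → B] + vTC[p' : E' → B'] − 1. -/
open unitInterval Set Topology

section ProdHelperLemmas

lemma continuous_of_opens {Z W : Type*} [TopologicalSpace Z] [TopologicalSpace W]
    {K : ℕ} (P : Fin K → Set Z)
    (hP : ∀ i, IsOpen (P i)) (hcov : ∀ z, ∃ i, z ∈ P i) {f : Z → W}
    (h : ∀ i, ContinuousOn f (P i)) : Continuous f := by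
  rw [continuous_iff_continuousAt]
  intro z
  obtain ⟨i, hi⟩ := hcov z
  exact (h i).continuousAt ((hP i).mem_nhds hi)

lemma isENRSet_empty {Z : Type*} [TopologicalSpace Z] : IsENRSet (∅ : Set Z) := by
  haveI : IsEmpty ↥(∅ : Set Z) := ⟨fun u => u.2⟩
  haveI : IsEmpty ↥(∅ : Set (Fin 0 → ℝ)) := ⟨fun u => u.2⟩
  exact ⟨0, isEmptyElim, IsEmbedding.of_subsingleton _, ∅, isOpen_empty,
    by simp [Set.range_eq_empty], isEmptyElim, continuous_of_discreteTopology,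
    fun a => isEmptyElim a⟩

lemma IsENR.of_homeomorph {A B : Type*} [TopologicalSpace A] [TopologicalSpace B]
    (h : A ≃ₜ B) (hB : IsENR B) : IsENR A := by
  obtain ⟨N, e, he, U, hU, hrange, r, hr, hspec⟩ := hB
  refine ⟨N, e ∘ h, he.comp h.isEmbedding, U, hU, ?_, fun u => h.symm (r u), by fun_prop, ?_⟩
  · rw [Set.range_comp, h.surjective.range_eq, Set.image_univ]
    exact hrange
  · intro a ha
    simp [hspec (h a) ha]

lemma IsENR.prodENR {A B : Type*} [TopologicalSpace A] [TopologicalSpace B]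
    (hA : IsENR A) (hB : IsENR B) : IsENR (A × B) := by
  obtain ⟨N, e, he, U, hU, hrange, r, hr, hspec⟩ := hA
  obtain ⟨N', e', he', U', hU', hrange', r', hr', hspec'⟩ := hB
  set π₁ : (Fin (N + N') → ℝ) → (Fin N → ℝ) :=
    fun y i => y ⟨i.1, Nat.lt_of_lt_of_le i.2 (Nat.le_add_right _ _)⟩ with hπ₁
  set π₂ : (Fin (N + N') → ℝ) → (Fin N' → ℝ) :=
    fun y j => y ⟨N + j.1, by omega⟩ with hπ₂
  have hπ₁c : Continuous π₁ := by fun_prop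
  have hπ₂c : Continuous π₂ := by fun_prop
  set f : A × B → (Fin (N + N') → ℝ) := fun q j =>
    if h : (j : ℕ) < N then e q.1 ⟨j, h⟩ else e' q.2 ⟨(j : ℕ) - N, by omega⟩ with hf
  have hfc : Continuous f := by
    apply continuous_pi
    intro j
    by_cases h : (j : ℕ) < N
    · simp only [hf, dif_pos h]
      exact (continuous_apply _).comp (he.continuous.comp continuous_fst)
    · simp only [hf, dif_neg h]
      exact (continuous_apply _).comp (he'.continuous.comp continuous_snd)
  have hp1 : ∀ q, π₁ (f q) = e q.1 := by
    intro q; funext i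
    simp only [hπ₁, hf]
    rw [dif_pos i.2]
  have hp2 : ∀ q, π₂ (f q) = e' q.2 := by
    intro q; funext j
    have h : ¬ (N + (j : ℕ) < N) := by omega
    simp only [hπ₂, hf]
    rw [dif_neg h]
    congr 1
    exact Fin.ext (by simp)
  set V : Set (Fin (N + N') → ℝ) := π₁ ⁻¹' U ∩ π₂ ⁻¹' U' with hV
  have hVo : IsOpen V := (hU.preimage hπ₁c).inter (hU'.preimage hπ₂c)
  have hrangef : Set.range f ⊆ V := by
    rintro - ⟨q, rfl⟩
    exact ⟨by rw [Set.mem_preimage, hp1]; exact hrange ⟨q.1, rfl⟩,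
      by rw [Set.mem_preimage, hp2]; exact hrange' ⟨q.2, rfl⟩⟩
  set ρ : V → A × B := fun y => (r ⟨π₁ y.1, y.2.1⟩, r' ⟨π₂ y.1, y.2.2⟩) with hρ
  have hρc : Continuous ρ := by
    apply Continuous.prodMk
    · exact hr.comp (Continuous.subtype_mk (hπ₁c.comp continuous_subtype_val) _)
    · exact hr'.comp (Continuous.subtype_mk (hπ₂c.comp continuous_subtype_val) _)
  have hρspec : ∀ (q : A × B) (h : f q ∈ V), ρ ⟨f q, h⟩ = q := by
    intro q h
    have e1 : (⟨π₁ (f q), h.1⟩ : U) = ⟨e q.1, hrange ⟨q.1, rfl⟩⟩ := Subtype.ext (hp1 q)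
    have e2 : (⟨π₂ (f q), h.2⟩ : U') = ⟨e' q.2, hrange' ⟨q.2, rfl⟩⟩ := Subtype.ext (hp2 q)
    simp only [hρ, e1, e2, hspec, hspec']
  have hemb : IsEmbedding f := by
    have hleft : Function.LeftInverse (fun y : V => ρ y)
        (fun q : A × B => (⟨f q, hrangef ⟨q, rfl⟩⟩ : V)) := fun q => hρspec q _
    have : IsEmbedding fun q : A × B => (⟨f q, hrangef ⟨q, rfl⟩⟩ : V) :=
      hleft.isEmbedding hρc (hfc.subtype_mk _)
    exact IsEmbedding.subtypeVal.comp this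
  exact ⟨N + N', f, hemb, V, hVo, hrangef, ρ, hρc, hρspec⟩

lemma isOpen_pieces {Z : Type*} [TopologicalSpace Z] {K : ℕ} {S : Set Z}
    (A : Fin K → Set Z) (hS : S = ⋃ t, A t)
    (hdisj : Pairwise fun i j => Disjoint (A i) (A j))
    (hcl : ∀ t, IsClosed (Subtype.val ⁻¹' (A t) : Set ↥S)) :
    ∀ t, IsOpen (Subtype.val ⁻¹' (A t) : Set ↥S) := by
  classical
  have hex : ∀ x : ↥S, ∃ t, (x : Z) ∈ A t := by
    intro x
    have hx : (x : Z) ∈ ⋃ t, A t := by rw [← hS]; exact x.2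
    exact Set.mem_iUnion.1 hx
  set idx : ↥S → Fin K := fun x => (hex x).choose with hidx
  have idxspec : ∀ x : ↥S, (x : Z) ∈ A (idx x) := fun x => (hex x).choose_spec
  have idx_eq : ∀ (x : ↥S) (t : Fin K), (x : Z) ∈ A t → idx x = t := by
    intro x t ht
    by_contra hne
    exact Set.disjoint_left.1 (hdisj hne) (idxspec x) ht
  intro t
  have hcompl : (Subtype.val ⁻¹' (A t) : Set ↥S)ᶜ =
      ⋃ t' ∈ ({t}ᶜ : Set (Fin K)), (Subtype.val ⁻¹' (A t') : Set ↥S) := by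
    ext x
    simp only [Set.mem_compl_iff, Set.mem_preimage, Set.mem_iUnion, Set.mem_singleton_iff]
    constructor
    · intro hx
      exact ⟨idx x, fun h => hx (h ▸ idxspec x), idxspec x⟩
    · rintro ⟨t', ht', hx⟩ hxt
      exact ht' ((idx_eq x t' hx).symm.trans (idx_eq x t hxt))
  rw [← isClosed_compl_iff, hcompl]
  exact Set.Finite.isClosed_biUnion (Set.toFinite _) (fun t' _ => hcl t')
lemma isENRSet_partition {Z : Type*} [TopologicalSpace Z] {K : ℕ} {S : Set Z}
    (A : Fin K → Set Z) (hS : S = ⋃ t, A t)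
    (henr : ∀ t, IsENRSet (A t))
    (hdisj : Pairwise fun i j => Disjoint (A i) (A j))
    (hcl : ∀ t, IsClosed (Subtype.val ⁻¹' (A t) : Set ↥S)) : IsENRSet S := by
  classical
  choose N e he U hU hrange r hr hspec using henr
  have hsub : ∀ t, A t ⊆ S := fun t => hS ▸ Set.subset_iUnion A t
  -- the index of a point of S
  have hex : ∀ x : ↥S, ∃ t, (x : Z) ∈ A t := by
    intro x
    have hx : (x : Z) ∈ ⋃ t, A t := by rw [← hS]; exact x.2
    exact Set.mem_iUnion.1 hx
  set idx : ↥S → Fin K := fun x => (hex x).choose with hidx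
  have idxspec : ∀ x : ↥S, (x : Z) ∈ A (idx x) := fun x => (hex x).choose_spec
  have idx_eq : ∀ (x : ↥S) (t : Fin K), (x : Z) ∈ A t → idx x = t := by
    intro x t ht
    by_contra hne
    exact Set.disjoint_left.1 (hdisj hne) (idxspec x) ht
  have hopen : ∀ t, IsOpen (Subtype.val ⁻¹' (A t) : Set ↥S) :=
    isOpen_pieces A hS hdisj hcl
  set M : ℕ := Finset.univ.sup N with hM
  have hNM : ∀ t, N t ≤ M := fun t => Finset.le_sup (Finset.mem_univ t)
  set last : Fin (M + 1) := ⟨M, Nat.lt_succ_self M⟩ with hlastdef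
  set π : ∀ t, (Fin (M + 1) → ℝ) → (Fin (N t) → ℝ) :=
    fun t y i => y ⟨i.1, by have := hNM t; omega⟩ with hπ
  have hπc : ∀ t, Continuous (π t) := by
    intro t; apply continuous_pi; intro i; exact continuous_apply _
  -- the piecewise embedding formula
  set F : ∀ (t : Fin K) (x : ↥S), (x : Z) ∈ A t → (Fin (M + 1) → ℝ) :=
    fun t x hx j => if h : (j : ℕ) < N t then e t ⟨(x : Z), hx⟩ ⟨(j : ℕ), h⟩
      else if (j : ℕ) = M then ((t : ℕ) : ℝ) else 0 with hF
  have F_congr : ∀ (t t' : Fin K) (h : t = t') (x : ↥S) (hx : (x : Z) ∈ A t)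
      (hx' : (x : Z) ∈ A t'), F t x hx = F t' x hx' := by
    intro t t' h x hx hx'; subst h; rfl
  set f : ↥S → (Fin (M + 1) → ℝ) := fun x => F (idx x) x (idxspec x) with hfdef
  have hp : ∀ (t : Fin K) (x : ↥S) (hx : (x : Z) ∈ A t), π t (F t x hx) = e t ⟨(x : Z), hx⟩ := by
    intro t x hx; funext i
    simp only [hπ, hF]
    rw [dif_pos i.2]
  have hlast : ∀ (t : Fin K) (x : ↥S) (hx : (x : Z) ∈ A t),
      F t x hx last = ((t : ℕ) : ℝ) := by
    intro t x hx
    simp only [hF, hlastdef]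
    rw [dif_neg (by have := hNM t; omega)]
    simp
  set V : ∀ t : Fin K, Set (Fin (M + 1) → ℝ) :=
    fun t => {y | π t y ∈ U t ∧ |y last - ((t : ℕ) : ℝ)| < 1 / 2} with hVdef
  have hVo : ∀ t, IsOpen (V t) := by
    intro t
    apply IsOpen.inter ((hU t).preimage (hπc t))
    have : Continuous fun y : Fin (M + 1) → ℝ => |y last - ((t : ℕ) : ℝ)| :=
      ((continuous_apply last).sub continuous_const).abs
    exact isOpen_Iio.preimage this
  have hVdisj : ∀ t t', t ≠ t' → ∀ y, y ∈ V t → y ∈ V t' → False := by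
    intro t t' hne y hy hy'
    have h1 : |((t : ℕ) : ℝ) - ((t' : ℕ) : ℝ)| < 1 := by
      calc |((t : ℕ) : ℝ) - ((t' : ℕ) : ℝ)|
          ≤ |((t : ℕ) : ℝ) - y last| + |y last - ((t' : ℕ) : ℝ)| :=
            abs_sub_le _ _ _
        _ < 1 / 2 + 1 / 2 := by
            rw [abs_sub_comm ((t : ℕ) : ℝ)]
            exact add_lt_add hy.2 hy'.2
        _ = 1 := by norm_num
    have h2 := abs_lt.1 h1
    have h3 : ((t : ℕ) : ℝ) < ((t' : ℕ) : ℝ) + 1 := by linarith [h2.2]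
    have h4 : ((t' : ℕ) : ℝ) < ((t : ℕ) : ℝ) + 1 := by linarith [h2.1]
    have h5 : (t : ℕ) < (t' : ℕ) + 1 := by exact_mod_cast h3
    have h6 : (t' : ℕ) < (t : ℕ) + 1 := by exact_mod_cast h4
    exact hne (Fin.ext (by omega))
  have hmemV : ∀ (t : Fin K) (x : ↥S) (hx : (x : Z) ∈ A t), F t x hx ∈ V t := by
    intro t x hx
    refine ⟨?_, ?_⟩
    · show π t (F t x hx) ∈ U t  -- π t (F t x hx) ∈ U t
      rw [show π t (F t x hx) = e t ⟨(x : Z), hx⟩ from hp t x hx]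
      exact hrange t ⟨_, rfl⟩
    · rw [hlast t x hx]
      simp only [sub_self, abs_zero]
      norm_num
  set Vu : Set (Fin (M + 1) → ℝ) := ⋃ t, V t with hVu
  have hVuo : IsOpen Vu := isOpen_iUnion hVo
  have hrangef : Set.range f ⊆ Vu := by
    rintro - ⟨x, rfl⟩
    exact Set.mem_iUnion.2 ⟨idx x, hmemV (idx x) x (idxspec x)⟩
  -- index of a point of Vu
  have hexV : ∀ y : ↥Vu, ∃ t, (y : Fin (M + 1) → ℝ) ∈ V t := fun y => Set.mem_iUnion.1 y.2
  set vidx : ↥Vu → Fin K := fun y => (hexV y).choose with hvidx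
  have vidxspec : ∀ y : ↥Vu, (y : Fin (M + 1) → ℝ) ∈ V (vidx y) := fun y => (hexV y).choose_spec
  have vidx_eq : ∀ (y : ↥Vu) (t : Fin K), (y : Fin (M + 1) → ℝ) ∈ V t → vidx y = t := by
    intro y t ht
    by_contra hne
    exact hVdisj _ _ hne _ (vidxspec y) ht
  set ρ : ↥Vu → ↥S := fun y =>
    ⟨(r (vidx y) ⟨π (vidx y) y.1, (vidxspec y).1⟩ : ↥(A (vidx y))).1,
      hsub (vidx y) (r (vidx y) ⟨π (vidx y) y.1, (vidxspec y).1⟩).2⟩ with hρ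
  have key : ∀ (y : ↥Vu) (t : Fin K) (hy : (y : Fin (M + 1) → ℝ) ∈ V t),
      ρ y = ⟨(r t ⟨π t y.1, hy.1⟩ : ↥(A t)).1, hsub t (r t ⟨π t y.1, hy.1⟩).2⟩ := by
    intro y t hy
    have h := vidx_eq y t hy
    subst h
    rfl
  have hρc : Continuous ρ := by
    apply continuous_of_opens (fun t => (Subtype.val ⁻¹' (V t) : Set ↥Vu))
      (fun t => (hVo t).preimage continuous_subtype_val)
      (fun y => ⟨vidx y, vidxspec y⟩)
    intro t
    rw [continuousOn_iff_continuous_restrict]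
    have : Set.domRestrict (Subtype.val ⁻¹' (V t)) ρ = fun y =>
        ⟨(r t ⟨π t y.1.1, y.2.1⟩ : ↥(A t)).1, hsub t (r t ⟨π t y.1.1, y.2.1⟩).2⟩ := by
      funext y
      exact key y.1 t y.2
    rw [this]
    apply Continuous.subtype_mk
    apply continuous_subtype_val.comp
    exact (hr t).comp (Continuous.subtype_mk
      ((hπc t).comp (continuous_subtype_val.comp continuous_subtype_val)) _)
  have hρspec : ∀ (x : ↥S) (h : f x ∈ Vu), ρ ⟨f x, h⟩ = x := by
    intro x h
    rw [key ⟨f x, h⟩ (idx x) (hmemV (idx x) x (idxspec x))]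
    have e1 : (⟨π (idx x) (f x), (hmemV (idx x) x (idxspec x)).1⟩ : ↥(U (idx x))) =
        ⟨e (idx x) ⟨(x : Z), idxspec x⟩, hrange (idx x) ⟨_, rfl⟩⟩ :=
      Subtype.ext (hp (idx x) x (idxspec x))
    rw [e1, hspec (idx x) ⟨(x : Z), idxspec x⟩]
  have hfc : Continuous f := by
    apply continuous_of_opens (fun t => (Subtype.val ⁻¹' (A t) : Set ↥S)) hopen
      (fun x => ⟨idx x, idxspec x⟩)
    intro t
    rw [continuousOn_iff_continuous_restrict]
    have : Set.domRestrict (Subtype.val ⁻¹' (A t)) f = fun x => F t x.1 x.2 := by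
      funext x
      exact F_congr _ _ (idx_eq x.1 t x.2) x.1 (idxspec x.1) x.2
    rw [this]
    apply continuous_pi
    intro j
    by_cases hj : (j : ℕ) < N t
    · simp only [hF, dif_pos hj]
      exact (continuous_apply _).comp ((he t).continuous.comp (Continuous.subtype_mk
        (continuous_subtype_val.comp continuous_subtype_val) _))
    · simp only [hF, dif_neg hj]
      exact continuous_const
  have hemb : IsEmbedding f := by
    have hleft : Function.LeftInverse (fun y : ↥Vu => ρ y)
        (fun x : ↥S => (⟨f x, hrangef ⟨x, rfl⟩⟩ : ↥Vu)) := fun x => hρspec x _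
    exact IsEmbedding.subtypeVal.comp (hleft.isEmbedding hρc (hfc.subtype_mk _))
  exact ⟨M + 1, f, hemb, Vu, hVuo, hrangef, ρ, hρc, hρspec⟩
lemma isENRSet_middle {E E' : Type*} [TopologicalSpace E] [TopologicalSpace E']
    {A : Set (E × E)} {A' : Set (E' × E')} (hA : IsENRSet A) (hA' : IsENRSet A') :
    IsENRSet {q : (E × E') × (E × E') | (q.1.1, q.2.1) ∈ A ∧ (q.1.2, q.2.2) ∈ A'} := by
  refine IsENR.of_homeomorph ?_ (IsENR.prodENR hA hA')
  exact
    { toFun := fun u => (⟨(u.1.1.1, u.1.2.1), u.2.1⟩, ⟨(u.1.1.2, u.1.2.2), u.2.2⟩)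
      invFun := fun a => ⟨((a.1.1.1, a.2.1.1), (a.1.1.2, a.2.1.2)), a.1.2, a.2.2⟩
      left_inv := fun u => rfl
      right_inv := fun a => rfl
      continuous_toFun := by fun_prop
      continuous_invFun := by fun_prop }

lemma continuous_prodMk_comp {X A B C : Type*} [TopologicalSpace X] [TopologicalSpace A]
    [TopologicalSpace B] [TopologicalSpace C] [LocallyCompactSpace A]
    {f : X → C(A, B)} {g : X → C(A, C)} (hf : Continuous f) (hg : Continuous g) :
    Continuous fun x => (f x).prodMk (g x) := by
  apply ContinuousMap.continuous_of_continuous_uncurry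
  have h1 := ContinuousMap.continuous_uncurry_of_continuous ⟨f, hf⟩
  have h2 := ContinuousMap.continuous_uncurry_of_continuous ⟨g, hg⟩
  exact h1.prodMk h2

end ProdHelperLemmas

/-- For regular d-fibrations `p : E → B` and `p' : E' → B'` (all spaces
ENRs), the product d-fibration satisfies
`vTC[p × p'] ≤ vTC[p] + vTC[p'] − 1`. -/
theorem vTCp_prod_le {E B E' B' : Type*} [TopologicalSpace E] [TopologicalSpace B]
    [TopologicalSpace E'] [TopologicalSpace B']
    (dE : DStruct E) (dB : DStruct B) (dE' : DStruct E') (dB' : DStruct B')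
    (p : C(E, B)) (p' : C(E', B'))
    (hE : IsENR E) (hB : IsENR B) (hE' : IsENR E') (hB' : IsENR B')
    (hp : IsDFibration dE dB p) (hp' : IsDFibration dE' dB' p')
    (hreg : IsRegularDFib dE p) (hreg' : IsRegularDFib dE' p') :
    vTCp (dE.prod dE') (p.prodMap p') ≤ vTCp dE p + vTCp dE' p' - 1 := by
  classical
  obtain ⟨n, hvn, A, hAprop, hAunion, hAdisj, hAcl⟩ := hreg
  obtain ⟨m, hvm, A', hA'prop, hA'union, hA'disj, hA'cl⟩ := hreg'
  rw [hvn, hvm]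
  have projE : ∀ q : (E × E') × (E × E'), q ∈ GammaEB (dE.prod dE') (p.prodMap p') →
      (q.1.1, q.2.1) ∈ GammaEB dE p ∧ (q.1.2, q.2.2) ∈ GammaEB dE' p' := by
    rintro q ⟨γ, ⟨⟨hγ1, hγ2⟩, b, hb⟩, h0, h1⟩
    exact ⟨⟨ContinuousMap.fst.comp γ, ⟨hγ1, ⟨b.1, fun t => congrArg Prod.fst (hb t)⟩⟩,
        congrArg Prod.fst h0, congrArg Prod.fst h1⟩,
      ⟨ContinuousMap.snd.comp γ, ⟨hγ2, ⟨b.2, fun t => congrArg Prod.snd (hb t)⟩⟩,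
        congrArg Prod.snd h0, congrArg Prod.snd h1⟩⟩
  by_cases hn0 : n = 0
  · subst hn0
    have hΓE : GammaEB dE p = ∅ := by
      rw [← hAunion]
      exact Set.iUnion_of_empty A
    have hGP : GammaEB (dE.prod dE') (p.prodMap p') = ∅ := by
      rw [Set.eq_empty_iff_forall_notMem]
      intro q hq
      have := (projE q hq).1
      rw [hΓE] at this
      exact this
    refine le_trans (sInf_le ?_) zero_le
    exact ⟨0, rfl, fun i => i.elim0, fun i => i.elim0, by rw [hGP]; exact Set.empty_subset _⟩
  by_cases hm0 : m = 0
  · subst hm0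
    have hΓE' : GammaEB dE' p' = ∅ := by
      rw [← hA'union]
      exact Set.iUnion_of_empty A'
    have hGP : GammaEB (dE.prod dE') (p.prodMap p') = ∅ := by
      rw [Set.eq_empty_iff_forall_notMem]
      intro q hq
      have := (projE q hq).2
      rw [hΓE'] at this
      exact this
    refine le_trans (sInf_le ?_) zero_le
    exact ⟨0, rfl, fun i => i.elim0, fun i => i.elim0, by rw [hGP]; exact Set.empty_subset _⟩
  have hn : 1 ≤ n := Nat.one_le_iff_ne_zero.2 hn0
  have hm : 1 ≤ m := Nat.one_le_iff_ne_zero.2 hm0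
  set K : ℕ := n + m - 1 with hK
  set Piece : Fin n → Fin m → Set ((E × E') × (E × E')) := fun i j =>
    {q | (q.1.1, q.2.1) ∈ A i ∧ (q.1.2, q.2.2) ∈ A' j} with hPiece
  set Pc : Fin K → Fin n → Set ((E × E') × (E × E')) := fun k i =>
    if h : (k : ℕ) - (i : ℕ) < m ∧ (i : ℕ) ≤ (k : ℕ) then
      Piece i ⟨(k : ℕ) - (i : ℕ), h.1⟩ else ∅ with hPc
  have hPc_mem : ∀ (k : Fin K) (i : Fin n) (q : (E × E') × (E × E')), q ∈ Pc k i ↔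
      ∃ j : Fin m, (i : ℕ) + (j : ℕ) = (k : ℕ) ∧ q ∈ Piece i j := by
    intro k i q
    constructor
    · intro hq
      by_cases h : (k : ℕ) - (i : ℕ) < m ∧ (i : ℕ) ≤ (k : ℕ)
      · simp only [hPc, dif_pos h] at hq
        exact ⟨⟨(k : ℕ) - (i : ℕ), h.1⟩, by simp only []; omega, hq⟩
      · simp only [hPc, dif_neg h] at hq
        exact absurd hq (Set.notMem_empty q)
    · rintro ⟨j, hij, hq⟩
      have h : (k : ℕ) - (i : ℕ) < m ∧ (i : ℕ) ≤ (k : ℕ) := ⟨by omega, by omega⟩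
      have hj : (⟨(k : ℕ) - (i : ℕ), h.1⟩ : Fin m) = j := Fin.ext (by simp only []; omega)
      simp only [hPc, dif_pos h, hj]
      exact hq
  set C : Fin K → Set ((E × E') × (E × E')) := fun k => ⋃ i, Pc k i with hC
  have hsubA : ∀ i, A i ⊆ GammaEB dE p := fun i => hAunion ▸ Set.subset_iUnion A i
  have hsubA' : ∀ j, A' j ⊆ GammaEB dE' p' := fun j => hA'union ▸ Set.subset_iUnion A' j
  have hCsub : ∀ (k : Fin K) (q : (E × E') × (E × E')), q ∈ C k →
      (q.1.1, q.2.1) ∈ GammaEB dE p ∧ (q.1.2, q.2.2) ∈ GammaEB dE' p' := by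
    intro k q hq
    obtain ⟨i, hi⟩ := Set.mem_iUnion.1 hq
    obtain ⟨j, -, hq'⟩ := (hPc_mem k i q).1 hi
    exact ⟨hsubA i hq'.1, hsubA' j hq'.2⟩
  have piece_unique : ∀ (i i' : Fin n) (j j' : Fin m) (q : (E × E') × (E × E')),
      q ∈ Piece i j → q ∈ Piece i' j' → i = i' ∧ j = j' := by
    intro i i' j j' q h h'
    constructor
    · by_contra hne
      exact Set.disjoint_left.1 (hAdisj hne) h.1 h'.1
    · by_contra hne
      exact Set.disjoint_left.1 (hA'disj hne) h.2 h'.2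
  have hPcdisj : ∀ k : Fin K, Pairwise fun i i' => Disjoint (Pc k i) (Pc k i') := by
    intro k i i' hne
    rw [Set.disjoint_left]
    intro q hq hq'
    obtain ⟨j, -, hq⟩ := (hPc_mem k i q).1 hq
    obtain ⟨j', -, hq'⟩ := (hPc_mem k i' q).1 hq'
    exact hne (piece_unique i i' j j' q hq hq').1
  have hclPc : ∀ (k : Fin K) (i : Fin n),
      IsClosed (Subtype.val ⁻¹' (Pc k i) : Set ↥(C k)) := by
    intro k i
    by_cases h : (k : ℕ) - (i : ℕ) < m ∧ (i : ℕ) ≤ (k : ℕ)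
    · set j : Fin m := ⟨(k : ℕ) - (i : ℕ), h.1⟩ with hjdef
      set φ : ↥(C k) → ↥(GammaEB dE p) :=
        fun u => ⟨(u.1.1.1, u.1.2.1), (hCsub k u.1 u.2).1⟩ with hφ
      set φ' : ↥(C k) → ↥(GammaEB dE' p') :=
        fun u => ⟨(u.1.1.2, u.1.2.2), (hCsub k u.1 u.2).2⟩ with hφ'
      have hφc : Continuous φ := by
        apply Continuous.subtype_mk
        fun_prop
      have hφ'c : Continuous φ' := by
        apply Continuous.subtype_mk
        fun_prop
      have key : (Subtype.val ⁻¹' (Pc k i) : Set ↥(C k)) =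
          φ ⁻¹' (Subtype.val ⁻¹' (⋃ i', ⋃ (_ : i' ≤ i), A i')) ∩
          φ' ⁻¹' (Subtype.val ⁻¹' (⋃ j', ⋃ (_ : j' ≤ j), A' j')) := by
        ext u
        simp only [Set.mem_preimage, Set.mem_inter_iff, Set.mem_iUnion]
        constructor
        · intro hu
          obtain ⟨j₁, hij₁, hu'⟩ := (hPc_mem k i u.1).1 hu
          have hj₁ : j₁ = j := Fin.ext (by simp only [hjdef]; omega)
          subst hj₁
          exact ⟨⟨i, le_rfl, hu'.1⟩, ⟨j, le_rfl, hu'.2⟩⟩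
        · rintro ⟨⟨i₂, hi₂, hE2⟩, ⟨j₂, hj₂, hE2'⟩⟩
          obtain ⟨i₁, hi₁⟩ := Set.mem_iUnion.1 u.2
          obtain ⟨j₁, hij₁, hu₁⟩ := (hPc_mem k i₁ u.1).1 hi₁
          obtain ⟨ei, ej⟩ := piece_unique i₁ i₂ j₁ j₂ u.1 hu₁ ⟨hE2, hE2'⟩
          have hi₂' : (i₂ : ℕ) ≤ (i : ℕ) := hi₂
          have hj₂' : (j₂ : ℕ) ≤ (j : ℕ) := hj₂
          have ei1 : (i₁ : ℕ) = (i₂ : ℕ) := congrArg Fin.val ei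
          have ej1 : (j₁ : ℕ) = (j₂ : ℕ) := congrArg Fin.val ej
          have hii : i₁ = i := Fin.ext (by simp only [hjdef] at *; omega)
          have hjj : j₁ = j := Fin.ext (by simp only [hjdef] at *; omega)
          rw [hii, hjj] at hu₁
          have hii1 : (i₁ : ℕ) = (i : ℕ) := congrArg Fin.val hii
          have hjj1 : (j₁ : ℕ) = (j : ℕ) := congrArg Fin.val hjj
          exact (hPc_mem k i u.1).2 ⟨j, by omega, hu₁⟩
      rw [key]
      exact ((hAcl i).preimage hφc).inter ((hA'cl j).preimage hφ'c)
    · simp only [hPc, dif_neg h, Set.preimage_empty]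
      exact isClosed_empty
  have hPcENR : ∀ (k : Fin K) (i : Fin n), IsENRSet (Pc k i) := by
    intro k i
    by_cases h : (k : ℕ) - (i : ℕ) < m ∧ (i : ℕ) ≤ (k : ℕ)
    · simp only [hPc, dif_pos h]
      exact isENRSet_middle (hAprop i).1 (hA'prop ⟨(k : ℕ) - (i : ℕ), h.1⟩).1
    · simp only [hPc, dif_neg h]
      exact isENRSet_empty
  have hCENR : ∀ k : Fin K, IsENRSet (C k) := by
    intro k
    exact isENRSet_partition (Pc k) (by rw [hC]) (hPcENR k) (hPcdisj k) (hclPc k)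
  have hopenPc : ∀ (k : Fin K) (i : Fin n),
      IsOpen (Subtype.val ⁻¹' (Pc k i) : Set ↥(C k)) := by
    intro k
    exact isOpen_pieces (Pc k) (by rw [hC]) (hPcdisj k) (hclPc k)
  -- sections on the pieces
  choose sE hsEc hsEp using fun i => (hAprop i).2
  choose sE' hsE'c hsE'p using fun j => (hA'prop j).2
  have hCsec : ∀ k : Fin K, DParamSecSet (dE.prod dE') (p.prodMap p') (C k) := by
    intro k
    set SecF : ∀ (i : Fin n) (j : Fin m) (u : ↥(C k)), u.1 ∈ Piece i j → C(I, E × E') :=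
      fun i j u hu =>
        (sE i ⟨(u.1.1.1, u.1.2.1), hu.1⟩).prodMk (sE' j ⟨(u.1.1.2, u.1.2.2), hu.2⟩)
      with hSecF
    have SecF_congr : ∀ (i i' : Fin n) (j j' : Fin m), i = i' → j = j' →
        ∀ (u : ↥(C k)) (hu : u.1 ∈ Piece i j) (hu' : u.1 ∈ Piece i' j'),
        SecF i j u hu = SecF i' j' u hu' := by
      intro i i' j j' hi hj u hu hu'
      subst hi; subst hj; rfl
    have hexu : ∀ u : ↥(C k), ∃ (i : Fin n) (j : Fin m),
        (i : ℕ) + (j : ℕ) = (k : ℕ) ∧ u.1 ∈ Piece i j := by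
      intro u
      obtain ⟨i, hi⟩ := Set.mem_iUnion.1 u.2
      obtain ⟨j, hij, hq⟩ := (hPc_mem k i u.1).1 hi
      exact ⟨i, j, hij, hq⟩
    choose ci cj hcij hmem using hexu
    set Sec : ↥(C k) → C(I, E × E') := fun u => SecF (ci u) (cj u) u (hmem u) with hSec
    have hSecc : Continuous Sec := by
      apply continuous_of_opens (fun i => (Subtype.val ⁻¹' (Pc k i) : Set ↥(C k)))
        (hopenPc k)
        (fun u => ⟨ci u, (hPc_mem k (ci u) u.1).2 ⟨cj u, hcij u, hmem u⟩⟩)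
      intro i
      by_cases h : (k : ℕ) - (i : ℕ) < m ∧ (i : ℕ) ≤ (k : ℕ)
      · set j : Fin m := ⟨(k : ℕ) - (i : ℕ), h.1⟩ with hjdef
        have hmem' : ∀ u : ↥((Subtype.val ⁻¹' (Pc k i) : Set ↥(C k))),
            u.1.1 ∈ Piece i j := by
          intro u
          obtain ⟨j', hj', hu⟩ := (hPc_mem k i u.1.1).1 u.2
          have : j' = j := Fin.ext (by simp only [hjdef]; omega)
          exact this ▸ hu
        rw [continuousOn_iff_continuous_restrict]
        have hres : Set.domRestrict (Subtype.val ⁻¹' (Pc k i)) Sec =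
            fun u => SecF i j u.1 (hmem' u) := by
          funext u
          obtain ⟨ei, ej⟩ :=
            piece_unique (ci u.1) i (cj u.1) j u.1.1 (hmem u.1) (hmem' u)
          exact SecF_congr _ _ _ _ ei ej u.1 (hmem u.1) (hmem' u)
        rw [hres]
        apply continuous_prodMk_comp
        · exact (hsEc i).comp (Continuous.subtype_mk (by fun_prop) _)
        · exact (hsE'c j).comp (Continuous.subtype_mk (by fun_prop) _)
      · have : (Subtype.val ⁻¹' (Pc k i) : Set ↥(C k)) = ∅ := by
          simp only [hPc, dif_neg h, Set.preimage_empty]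
        rw [this]
        exact continuousOn_empty _
    refine ⟨Sec, hSecc, ?_⟩
    intro u
    have hu := hmem u
    set a : ↥(A (ci u)) := ⟨(u.1.1.1, u.1.2.1), hu.1⟩ with ha
    set a' : ↥(A' (cj u)) := ⟨(u.1.1.2, u.1.2.2), hu.2⟩ with ha'
    obtain ⟨⟨hγd, bE, hbE⟩, hγ0, hγ1⟩ := hsEp (ci u) a
    obtain ⟨⟨hγ'd, bE', hbE'⟩, hγ'0, hγ'1⟩ := hsE'p (cj u) a'
    have hfst : ContinuousMap.fst.comp (Sec u) = sE (ci u) a := by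
      ext t; rfl
    have hsnd : ContinuousMap.snd.comp (Sec u) = sE' (cj u) a' := by
      ext t; rfl
    refine ⟨⟨⟨?_, ?_⟩, ⟨(bE, bE'), fun t => ?_⟩⟩, ?_, ?_⟩
    · rw [hfst]; exact hγd
    · rw [hsnd]; exact hγ'd
    · exact Prod.ext (hbE t) (hbE' t)
    · show ((sE (ci u) a) 0, (sE' (cj u) a') 0) = u.1.1
      rw [hγ0, hγ'0]
    · show ((sE (ci u) a) 1, (sE' (cj u) a') 1) = u.1.2
      rw [hγ1, hγ'1]
  -- coverage
  have hcover : GammaEB (dE.prod dE') (p.prodMap p') ⊆ ⋃ k, C k := by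
    intro q hq
    obtain ⟨hqE, hqE'⟩ := projE q hq
    rw [← hAunion] at hqE
    rw [← hA'union] at hqE'
    obtain ⟨i, hi⟩ := Set.mem_iUnion.1 hqE
    obtain ⟨j, hj⟩ := Set.mem_iUnion.1 hqE'
    have hk : (i : ℕ) + (j : ℕ) < K := by
      have := i.2
      have := j.2
      omega
    refine Set.mem_iUnion.2 ⟨⟨(i : ℕ) + (j : ℕ), hk⟩, ?_⟩
    refine Set.mem_iUnion.2 ⟨i, (hPc_mem _ i q).2 ⟨j, rfl, ⟨hi, hj⟩⟩⟩
  have hle : vTCp (dE.prod dE') (p.prodMap p') ≤ (K : ℕ∞) :=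
    sInf_le ⟨K, rfl, C, fun k => ⟨hCENR k, hCsec k⟩, hcover⟩
  refine hle.trans (le_of_eq ?_)
  rw [hK]
  rw [show ((n + m - 1 : ℕ) : ℕ∞) = ((n + m : ℕ) : ℕ∞) - ((1 : ℕ) : ℕ∞) from
    ENat.coe_sub _ _]
  push_cast
  rfl
end

section
/- For the Hopf fibration p : S^{2n+1} → ℂP^n (a principal S¹-bundle), with S^{2n+1} equipped with the d-structure associated to any d-structure on ℂP^n (e.g. the standard one induced from the directed sphere structure on S² when n = 1), the directed parametrized topological complexity equals 2: vTC[p : S^{2n+1} → ℂP^n] = 2. In particular vTC[p : S³ → S²] = 2. -/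
open unitInterval Set Topology

noncomputable section

/-- The equivalence relation on the unit sphere of `ℂ^{n+1}` identifying unit vectors
spanning the same complex line. -/
def hopfSetoid (n : ℕ) : Setoid ↥(Metric.sphere (0 : EuclideanSpace ℂ (Fin (n + 1))) 1) where
  r z w := ∃ c : ℂ, ‖c‖ = 1 ∧
    c • (z : EuclideanSpace ℂ (Fin (n + 1))) = (w : EuclideanSpace ℂ (Fin (n + 1)))
  iseqv := by
    constructor
    · exact fun z => ⟨1, by simp, by simp⟩
    · rintro z w ⟨c, hc, hcw⟩
      have hc0 : c ≠ 0 := by intro hc0; rw [hc0] at hc; simp at hc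
      exact ⟨c⁻¹, by rw [norm_inv, hc]; norm_num,
        by rw [← hcw, smul_smul, inv_mul_cancel₀ hc0, one_smul]⟩
    · rintro z w v ⟨c, hc, hcw⟩ ⟨d, hd, hdv⟩
      exact ⟨d * c, by rw [norm_mul, hc, hd]; norm_num, by rw [mul_smul, hcw, hdv]⟩

/-- The complex projective space `ℂP^n` as the quotient of the unit sphere `S^{2n+1}` of
`ℂ^{n+1}` by the span relation. -/
def CPSpace (n : ℕ) : Type := Quotient (hopfSetoid n)

instance (n : ℕ) : TopologicalSpace (CPSpace n) :=
  inferInstanceAs (TopologicalSpace (Quotient (hopfSetoid n)))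

/-- The Hopf fibration `S^{2n+1} → ℂP^n`, sending a unit vector to the complex line it
spans. -/
def hopfMap (n : ℕ) : C(↥(Metric.sphere (0 : EuclideanSpace ℂ (Fin (n + 1))) 1), CPSpace n) :=
  ⟨Quotient.mk (hopfSetoid n), continuous_quotient_mk'⟩
namespace HopfAux
open Complex

variable {n : ℕ}

abbrev Amb (n : ℕ) := EuclideanSpace ℂ (Fin (n + 1))
abbrev Sph (n : ℕ) := ↥(Metric.sphere (0 : Amb n) 1)

/-- Complex inner product on the ambient space. -/
def ip (z w : Amb n) : ℂ := @inner ℂ _ _ z w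

lemma continuous_ip : Continuous fun q : Amb n × Amb n => ip q.1 q.2 := continuous_inner

lemma norm_coe (z : Sph n) : ‖(z : Amb n)‖ = 1 := mem_sphere_zero_iff_norm.mp z.2

lemma smul_mem_sphere {c : ℂ} (hc : ‖c‖ = 1) (z : Sph n) :
    c • (z : Amb n) ∈ Metric.sphere (0 : Amb n) 1 := by
  rw [mem_sphere_zero_iff_norm, norm_smul, hc, norm_coe, mul_one]

/-- Scalar rotation of a sphere point. -/
def smulS (c : ℂ) (hc : ‖c‖ = 1) (z : Sph n) : Sph n := ⟨c • (z : Amb n), smul_mem_sphere hc z⟩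

lemma hopf_eq_iff {z w : Sph n} :
    hopfMap n z = hopfMap n w ↔ ∃ c : ℂ, ‖c‖ = 1 ∧ c • (z : Amb n) = (w : Amb n) := by
  constructor
  · exact fun h => Quotient.exact h
  · exact fun h => Quotient.sound h

lemma ip_self (z : Sph n) : ip (z : Amb n) (z : Amb n) = 1 := by
  rw [ip, inner_self_eq_norm_sq_to_K, norm_coe]
  norm_num

lemma ip_smul_right (z : Sph n) (c : ℂ) (w : Amb n) :
    ip (z : Amb n) (c • w) = c * ip (z : Amb n) w := inner_smul_right _ _ _

lemma coeff_eq {z w : Sph n} (h : hopfMap n z = hopfMap n w) :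
    ‖ip (z : Amb n) (w : Amb n)‖ = 1 ∧
      ip (z : Amb n) (w : Amb n) • (z : Amb n) = (w : Amb n) := by
  obtain ⟨c, hc, hcw⟩ := hopf_eq_iff.mp h
  have hip : ip (z : Amb n) (w : Amb n) = c := by
    rw [← hcw, ip_smul_right, ip_self, mul_one]
  rw [hip]
  exact ⟨hc, hcw⟩

lemma circ_slit {c : ℂ} (hc : ‖c‖ = 1) (h : c ≠ -1) : c ∈ slitPlane := by
  rw [Complex.mem_slitPlane_iff]
  by_contra hcon
  push_neg at hcon
  obtain ⟨hre, him⟩ := hcon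
  have hcre : c = (c.re : ℂ) := by
    apply Complex.ext <;> simp [him]
  have habs : |c.re| = 1 := by
    have := hc
    rw [hcre] at this
    simpa using this
  have : c.re = -1 := by
    rcases abs_cases c.re with ⟨h1, _⟩ | ⟨h1, _⟩
    · nlinarith
    · linarith [habs, h1]
  apply h
  rw [hcre, this]
  norm_num

end HopfAux
namespace HopfAux
open Complex

variable {n : ℕ}

lemma norm_exp_mul_I (r : ℝ) : ‖Complex.exp ((r : ℂ) * Complex.I)‖ = 1 := by
  rw [Complex.norm_exp]
  simp

/-- The rotation family: `((z, θ), t) ↦ exp(θ t i) • z`. -/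
def rotPath : C((Sph n × ℝ) × I, Sph n) where
  toFun q := ⟨Complex.exp ((↑(q.1.2 * (q.2 : ℝ)) : ℂ) * Complex.I) • (q.1.1 : Amb n),
    smul_mem_sphere (norm_exp_mul_I _) q.1.1⟩
  continuous_toFun := by
    apply Continuous.subtype_mk
    fun_prop

lemma rotPath_apply (z : Sph n) (θ : ℝ) (t : I) :
    (rotPath ((z, θ), t) : Amb n) = Complex.exp ((↑(θ * (t : ℝ)) : ℂ) * Complex.I) • (z : Amb n) := rfl

lemma hopf_rotPath (z : Sph n) (θ : ℝ) (t : I) :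
    hopfMap n (rotPath ((z, θ), t)) = hopfMap n z := by
  exact (hopf_eq_iff.mpr ⟨Complex.exp ((↑(θ * (t : ℝ)) : ℂ) * Complex.I), norm_exp_mul_I _, rfl⟩).symm

/-- The rotation path `t ↦ exp(θ t i) • z`. -/
def rotCM (z : Sph n) (θ : ℝ) : C(I, Sph n) := ContinuousMap.curry rotPath (z, θ)

lemma rotCM_apply (z : Sph n) (θ : ℝ) (t : I) : rotCM z θ t = rotPath ((z, θ), t) := rfl

lemma rotCM_zero (z : Sph n) (θ : ℝ) : rotCM z θ 0 = z := by
  apply Subtype.ext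
  rw [rotCM_apply, rotPath_apply]
  simp

lemma rotCM_one (z : Sph n) (θ : ℝ) :
    (rotCM z θ 1 : Amb n) = Complex.exp ((θ : ℂ) * Complex.I) • (z : Amb n) := by
  rw [rotCM_apply, rotPath_apply]
  norm_num

lemma rotCM_mem_dEB (dB : DStruct (CPSpace n)) (z : Sph n) (θ : ℝ) :
    rotCM z θ ∈ dEB (assocDStruct dB (hopfMap n)) (hopfMap n) := by
  constructor
  · show (hopfMap n).comp (rotCM z θ) ∈ dB.paths
    have h : (hopfMap n).comp (rotCM z θ) = ContinuousMap.const I (hopfMap n z) := by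
      ext t
      exact hopf_rotPath z θ t
    rw [h]
    exact dB.const_mem _
  · exact ⟨hopfMap n z, fun t => hopf_rotPath z θ t⟩

lemma rotCM_one_eq {z w : Sph n} (h : hopfMap n z = hopfMap n w) :
    rotCM z (Complex.arg (ip (z : Amb n) (w : Amb n))) 1 = w := by
  apply Subtype.ext
  rw [rotCM_one]
  obtain ⟨hnorm, hsmul⟩ := coeff_eq h
  have habs : ((‖ip (z : Amb n) (w : Amb n)‖ : ℝ) : ℂ) = 1 := by
    rw [hnorm]; norm_num
  have hexp : Complex.exp ((Complex.arg (ip (z : Amb n) (w : Amb n)) : ℂ) * Complex.I)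
      = ip (z : Amb n) (w : Amb n) := by
    have := Complex.norm_mul_exp_arg_mul_I (ip (z : Amb n) (w : Amb n))
    rw [habs, one_mul] at this
    exact this
  rw [hexp, hsmul]

lemma gamma_eq (dB : DStruct (CPSpace n)) :
    GammaEB (assocDStruct dB (hopfMap n)) (hopfMap n)
      = {q : Sph n × Sph n | hopfMap n q.1 = hopfMap n q.2} := by
  ext q
  constructor
  · rintro ⟨γ, ⟨_, b, hb⟩, h0, h1⟩
    show hopfMap n q.1 = hopfMap n q.2
    rw [← h0, ← h1, hb 0, hb 1]
  · intro h
    exact ⟨rotCM q.1 (Complex.arg (ip (q.1 : Amb n) (q.2 : Amb n))),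
      rotCM_mem_dEB dB _ _, rotCM_zero _ _, rotCM_one_eq h⟩

end HopfAux
namespace HopfAux
open Complex

variable {n : ℕ}

/-- The set `U_a`: fibrewise pairs whose rotation coefficient differs from `a`. -/
def Ua (n : ℕ) (a : ℂ) : Set (Sph n × Sph n) :=
  {q | hopfMap n q.1 = hopfMap n q.2 ∧ ip (q.1 : Amb n) (q.2 : Amb n) ≠ a}

lemma coeff_slit {a c : ℂ} (ha : a * a = 1) (hna : ‖a‖ = 1) (hc : ‖c‖ = 1) (hne : c ≠ a) :
    -a * c ∈ slitPlane := by
  apply circ_slit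
  · rw [norm_mul, norm_neg, hna, hc, mul_one]
  · intro hcon
    apply hne
    have := congrArg (fun x => (-a) * x) hcon
    calc c = (-a * -a) * c := by rw [neg_mul_neg, ha, one_mul]
      _ = -a * (-a * c) := by ring
      _ = -a * (-1) := by rw [hcon]
      _ = a := by ring

lemma dparamsec_Ua (dB : DStruct (CPSpace n)) {a : ℂ} (ha : a * a = 1) (hna : ‖a‖ = 1)
    (φ : ℝ) (hφ : -a * Complex.exp ((φ : ℂ) * Complex.I) = 1) :
    DParamSecSet (assocDStruct dB (hopfMap n)) (hopfMap n) (Ua n a) := by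
  refine ⟨fun u => rotCM u.1.1
      (Complex.arg (-a * ip (u.1.1 : Amb n) (u.1.2 : Amb n)) + φ), ?_, ?_⟩
  · -- continuity
    have hmain : Continuous fun u : ↥(Ua n a) => ((u.1.1 : Sph n),
        Complex.arg (-a * ip (u.1.1 : Amb n) (u.1.2 : Amb n)) + φ) := by
      apply Continuous.prodMk
      · exact continuous_fst.comp continuous_subtype_val
      · apply Continuous.add _ continuous_const
        rw [continuous_iff_continuousAt]
        intro u
        have hval : Continuous fun u : ↥(Ua n a) =>
            -a * ip (u.1.1 : Amb n) (u.1.2 : Amb n) := by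
          apply continuous_const.mul
          exact continuous_ip.comp (Continuous.prodMk
            (continuous_subtype_val.comp (continuous_fst.comp continuous_subtype_val))
            (continuous_subtype_val.comp (continuous_snd.comp continuous_subtype_val)))
        exact ContinuousAt.comp (g := Complex.arg)
          (Complex.continuousAt_arg (coeff_slit ha hna (coeff_eq u.2.1).1 u.2.2))
          hval.continuousAt
    exact (ContinuousMap.curry rotPath).continuous.comp hmain
  · intro u
    obtain ⟨hq, hne⟩ := u.2
    obtain ⟨hnorm, hsmul⟩ := coeff_eq hq
    refine ⟨rotCM_mem_dEB dB _ _, rotCM_zero _ _, ?_⟩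
    apply Subtype.ext
    rw [rotCM_one]
    have habs : ((‖-a * ip (u.1.1 : Amb n) (u.1.2 : Amb n)‖ : ℝ) : ℂ) = 1 := by
      rw [norm_mul, norm_neg, hna, hnorm]
      norm_num
    have hexp : Complex.exp ((↑(Complex.arg (-a * ip (u.1.1 : Amb n) (u.1.2 : Amb n)) + φ) : ℂ)
        * Complex.I) = ip (u.1.1 : Amb n) (u.1.2 : Amb n) := by
      push_cast
      rw [add_mul, Complex.exp_add]
      have h1 := Complex.norm_mul_exp_arg_mul_I (-a * ip (u.1.1 : Amb n) (u.1.2 : Amb n))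
      rw [habs, one_mul] at h1
      rw [h1]
      calc -a * ip (u.1.1 : Amb n) (u.1.2 : Amb n) * Complex.exp ((φ : ℂ) * Complex.I)
          = ip (u.1.1 : Amb n) (u.1.2 : Amb n) * (-a * Complex.exp ((φ : ℂ) * Complex.I)) := by
            ring
        _ = ip (u.1.1 : Amb n) (u.1.2 : Amb n) := by rw [hφ, mul_one]
    rw [hexp, hsmul]

end HopfAux
namespace HopfAux
open Complex

variable {n : ℕ}

/-- A linear homeomorphism from the ambient product space to a Euclidean coordinate space. -/
def ambHomeo (n : ℕ) :
    (Amb n × Amb n) ≃ₜ (Fin (Module.finrank ℝ (Amb n × Amb n)) → ℝ) :=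
  (toEuclidean (E := Amb n × Amb n)).toHomeomorph.trans
    (EuclideanSpace.equiv (Fin (Module.finrank ℝ (Amb n × Amb n))) ℝ).toHomeomorph

/-- The inclusion of a pair of sphere points into the ambient product space. -/
def incl2 (q : Sph n × Sph n) : Amb n × Amb n := ((q.1 : Amb n), (q.2 : Amb n))

lemma continuous_incl2 : Continuous (incl2 (n := n)) :=
  (continuous_subtype_val.comp continuous_fst).prodMk
    (continuous_subtype_val.comp continuous_snd)

lemma isEmbedding_incl2 : IsEmbedding (incl2 (n := n)) :=
  IsEmbedding.subtypeVal.prodMap IsEmbedding.subtypeVal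

/-- ENR criterion: a subset of `Sph n × Sph n` which is a retract of an open subset of the
ambient space is an ENR. -/
lemma isENRSet_of_retract (S : Set (Sph n × Sph n)) (V : Set (Amb n × Amb n)) (hVo : IsOpen V)
    (hSV : ∀ q ∈ S, incl2 q ∈ V)
    (sig : ↥V → ↥S) (hsigc : Continuous sig)
    (hsig : ∀ (q : ↥S) (h : incl2 q.val ∈ V), sig ⟨incl2 q.val, h⟩ = q) :
    IsENRSet S := by
  refine ⟨Module.finrank ℝ (Amb n × Amb n),
    fun q => ambHomeo n (incl2 q.val), ?_, (ambHomeo n) '' V, ?_, ?_, ?_⟩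
  · exact ((ambHomeo n).isEmbedding.comp isEmbedding_incl2).comp IsEmbedding.subtypeVal
  · exact (ambHomeo n).isOpenMap V hVo
  · rintro x ⟨q, rfl⟩
    exact Set.mem_image_of_mem _ (hSV q.val q.2)
  · have hmem : ∀ x : ↥((ambHomeo n) '' V), (ambHomeo n).symm x.val ∈ V := by
      rintro ⟨x, v, hv, rfl⟩
      rwa [Homeomorph.symm_apply_apply]
    refine ⟨fun x => sig ⟨(ambHomeo n).symm x.val, hmem x⟩, ?_, ?_⟩
    · exact hsigc.comp (Continuous.subtype_mk
        ((ambHomeo n).continuous_symm.comp continuous_subtype_val) _)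
    · intro a h
      have harg : (⟨(ambHomeo n).symm (ambHomeo n (incl2 a.val)), hmem ⟨_, h⟩⟩ : ↥V)
          = ⟨incl2 a.val, by simpa using hSV a.val a.2⟩ := by
        apply Subtype.ext
        exact (ambHomeo n).symm_apply_apply _
      · show sig _ = a
        rw [harg]
        exact hsig a _

end HopfAux
namespace HopfAux
open Complex

variable {n : ℕ}

/-- The open neighbourhood of (the image of) `U_a` in the ambient space. -/
def Va (n : ℕ) (a : ℂ) : Set (Amb n × Amb n) :=
  {q | q.1 ≠ 0} ∩ {q | -a * ip q.1 q.2 ∈ slitPlane}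

lemma isOpen_Va (a : ℂ) : IsOpen (Va n a) := by
  apply IsOpen.inter
  · exact isOpen_compl_singleton.preimage continuous_fst
  · exact Complex.isOpen_slitPlane.preimage (continuous_const.mul continuous_ip)

lemma mem_Va {a : ℂ} (ha : a * a = 1) (hna : ‖a‖ = 1) {q : Sph n × Sph n} (hq : q ∈ Ua n a) :
    incl2 q ∈ Va n a := by
  constructor
  · show (q.1 : Amb n) ≠ 0
    intro h0
    have := norm_coe q.1
    rw [h0] at this
    simp at this
  · exact coeff_slit ha hna (coeff_eq hq.1).1 hq.2

lemma slit_ne_zero {c : ℂ} (hc : c ∈ slitPlane) : c ≠ 0 := by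
  intro h
  rw [h] at hc
  rw [Complex.mem_slitPlane_iff] at hc
  simp at hc

section retraction

variable {a : ℂ} (ha : a * a = 1) (hna : ‖a‖ = 1)

/-- Normalized first coordinate. -/
def nz (v : ↥(Va n a)) : Amb n := ((‖v.val.1‖ : ℂ))⁻¹ • v.val.1

lemma nz_norm (v : ↥(Va n a)) : ‖nz v‖ = 1 := by
  have h1 : v.val.1 ≠ 0 := v.2.1
  rw [nz, norm_smul, norm_inv, Complex.norm_real, Real.norm_eq_abs,
    _root_.abs_of_nonneg (norm_nonneg _), inv_mul_cancel₀ (norm_ne_zero_iff.mpr h1)]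

/-- Normalized coefficient. -/
def nc (v : ↥(Va n a)) : ℂ := ip (nz v) v.val.2

lemma nc_eq (v : ↥(Va n a)) : nc v = ((‖v.val.1‖ : ℂ))⁻¹ * ip v.val.1 v.val.2 := by
  rw [nc, nz, ip, inner_smul_left, ip]
  congr 1
  rw [map_inv₀, Complex.conj_ofReal]

lemma nc_ne_zero (v : ↥(Va n a)) : nc v ≠ 0 := by
  rw [nc_eq]
  have h1 : v.val.1 ≠ 0 := v.2.1
  have h2 : ip v.val.1 v.val.2 ≠ 0 := by
    intro h
    apply slit_ne_zero v.2.2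
    rw [h, mul_zero]
  exact mul_ne_zero (inv_ne_zero (by
    simpa using norm_ne_zero_iff.mpr h1)) h2

/-- Unit coefficient. -/
def ud (v : ↥(Va n a)) : ℂ := ((‖nc v‖ : ℂ))⁻¹ * nc v

lemma ud_norm (v : ↥(Va n a)) : ‖ud v‖ = 1 := by
  rw [ud, norm_mul, norm_inv, Complex.norm_real, Real.norm_eq_abs,
    _root_.abs_of_nonneg (norm_nonneg _), inv_mul_cancel₀ (norm_ne_zero_iff.mpr (nc_ne_zero v))]

lemma nc_eq_norm_mul_ud (v : ↥(Va n a)) : nc v = (‖nc v‖ : ℂ) * ud v := by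
  rw [ud, ← mul_assoc, mul_inv_cancel₀ (by
    simpa using norm_ne_zero_iff.mpr (nc_ne_zero v)), one_mul]

/-- The retraction map `V_a → U_a`. -/
def retr (ha : a * a = 1) (hna : ‖a‖ = 1) (v : ↥(Va n a)) : ↥(Ua n a) := by
  refine ⟨(⟨nz v, by rw [mem_sphere_zero_iff_norm]; exact nz_norm v⟩,
    ⟨ud v • nz v, by
      rw [mem_sphere_zero_iff_norm, norm_smul, ud_norm, nz_norm, mul_one]⟩), ?_, ?_⟩
  · exact hopf_eq_iff.mpr ⟨ud v, ud_norm v, rfl⟩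
  · show ip (nz v) (ud v • nz v) ≠ a
    have hips : ip (nz v) (nz v) = 1 := by
      rw [ip, inner_self_eq_norm_sq_to_K, nz_norm]
      norm_num
    have hipd : ip (nz v) (ud v • nz v) = ud v := by
      rw [ip, inner_smul_right, ← ip, hips, mul_one]
    rw [hipd]
    intro hcon
    have hnc := nc_eq_norm_mul_ud (a := a) v
    rw [hcon] at hnc
    have hslit : -a * ip v.val.1 v.val.2 ∈ slitPlane := v.2.2
    have hip2 : ip v.val.1 v.val.2 = (‖v.val.1‖ : ℂ) * nc v := by
      rw [nc_eq, ← mul_assoc, mul_inv_cancel₀ (by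
        simpa using norm_ne_zero_iff.mpr (v.2.1 : v.val.1 ≠ 0)), one_mul]
    have key : -a * ip v.val.1 v.val.2 = -((↑(‖v.val.1‖ * ‖nc v‖) : ℂ)) := by
      rw [hip2]
      push_cast
      linear_combination (-a * ((‖v.val.1‖ : ℝ) : ℂ)) * hnc
        - (((‖v.val.1‖ : ℝ) : ℂ) * ((‖nc v‖ : ℝ) : ℂ)) * ha
    rw [key, Complex.mem_slitPlane_iff] at hslit
    have h1 : (0:ℝ) ≤ ‖v.val.1‖ * ‖nc v‖ := by positivity
    rcases hslit with h | h
    · rw [← Complex.ofReal_neg, Complex.ofReal_re] at h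
      linarith
    · rw [← Complex.ofReal_neg, Complex.ofReal_im] at h
      exact h rfl

end retraction
end HopfAux
namespace HopfAux
open Complex

variable {n : ℕ} {a : ℂ}

lemma continuous_nz : Continuous (nz (n := n) (a := a)) := by
  refine Continuous.smul (f := fun v : ↥(Va n a) => ((‖v.val.1‖ : ℂ))⁻¹)
    (g := fun v : ↥(Va n a) => v.val.1) ?_ ?_
  · apply Continuous.inv₀
    · exact Complex.continuous_ofReal.comp
        (continuous_norm.comp (continuous_fst.comp continuous_subtype_val))
    · intro v
      simpa using norm_ne_zero_iff.mpr (v.2.1 : v.val.1 ≠ 0)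
  · exact continuous_fst.comp continuous_subtype_val

lemma continuous_nc : Continuous (nc (n := n) (a := a)) := by
  have h : nc (n := n) (a := a) = (fun q : Amb n × Amb n => ip q.1 q.2) ∘
      (fun v => (nz v, v.val.2)) := rfl
  rw [h]
  exact continuous_ip.comp (continuous_nz.prodMk (continuous_snd.comp continuous_subtype_val))

lemma continuous_ud : Continuous (ud (n := n) (a := a)) := by
  apply Continuous.mul
  · apply Continuous.inv₀
    · exact Complex.continuous_ofReal.comp (continuous_norm.comp continuous_nc)
    · intro v
      simpa using norm_ne_zero_iff.mpr (nc_ne_zero v)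
  · exact continuous_nc

lemma continuous_retr (ha : a * a = 1) (hna : ‖a‖ = 1) :
    Continuous (retr (n := n) ha hna) := by
  apply Continuous.subtype_mk
  apply Continuous.prodMk
  · exact Continuous.subtype_mk continuous_nz _
  · exact Continuous.subtype_mk (continuous_ud.smul continuous_nz) _

lemma retr_fixes (ha : a * a = 1) (hna : ‖a‖ = 1) (q : ↥(Ua n a))
    (h : incl2 q.val ∈ Va n a) : retr ha hna ⟨incl2 q.val, h⟩ = q := by
  set v : ↥(Va n a) := ⟨incl2 q.val, h⟩ with hv
  have hz1 : v.val.1 = (q.val.1 : Amb n) := rfl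
  have hz2 : v.val.2 = (q.val.2 : Amb n) := rfl
  have hnz : nz v = (q.val.1 : Amb n) := by
    rw [nz, hz1, norm_coe]
    norm_num
  have hnc : nc v = ip (q.val.1 : Amb n) (q.val.2 : Amb n) := by
    rw [nc, hnz, hz2]
  have hncn : ‖nc v‖ = 1 := by rw [hnc]; exact (coeff_eq q.2.1).1
  have hud : ud v = ip (q.val.1 : Amb n) (q.val.2 : Amb n) := by
    rw [ud, hncn, hnc]
    norm_num
  apply Subtype.ext
  apply Prod.ext
  · apply Subtype.ext
    exact hnz
  · apply Subtype.ext
    show ud v • nz v = (q.val.2 : Amb n)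
    rw [hud, hnz]
    exact (coeff_eq q.2.1).2

lemma isENRSet_Ua (ha : a * a = 1) (hna : ‖a‖ = 1) : IsENRSet (Ua n a) := by
  exact isENRSet_of_retract (Ua n a) (Va n a) (isOpen_Va a)
    (fun q hq => mem_Va ha hna hq) (retr ha hna) (continuous_retr ha hna)
    (retr_fixes ha hna)

end HopfAux
namespace HopfAux
open Complex

variable {n : ℕ}

/-- Base point of the sphere. -/
def z₀ (n : ℕ) : Sph n :=
  ⟨EuclideanSpace.single 0 1, by
    rw [mem_sphere_zero_iff_norm, EuclideanSpace.norm_single]; norm_num⟩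

/-- The unit complex number `exp(2πθ i)`. -/
def cth (θ : ℝ) : ℂ := Complex.exp ((↑(2 * Real.pi * θ) : ℂ) * Complex.I)

lemma cth_norm (θ : ℝ) : ‖cth θ‖ = 1 := norm_exp_mul_I _

lemma continuous_cth : Continuous cth :=
  Complex.continuous_exp.comp ((Complex.continuous_ofReal.comp
    (continuous_const.mul continuous_id)).mul continuous_const)

lemma cth_zero : cth 0 = 1 := by simp [cth]

lemma cth_one : cth 1 = 1 := by
  rw [cth]
  norm_num

/-- The loop of pairs `(z₀, exp(2πθ i) z₀)` inside `Γ`. -/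
def pt (θ : I) : Sph n × Sph n :=
  (z₀ n, ⟨cth θ • (z₀ n : Amb n), smul_mem_sphere (cth_norm _) _⟩)

lemma continuous_pt : Continuous (pt (n := n)) := by
  apply Continuous.prodMk continuous_const
  apply Continuous.subtype_mk
  exact ((continuous_cth.comp continuous_subtype_val).smul continuous_const)

lemma pt_mem_gamma (dB : DStruct (CPSpace n)) (θ : I) :
    pt θ ∈ GammaEB (assocDStruct dB (hopfMap n)) (hopfMap n) := by
  rw [gamma_eq]
  exact hopf_eq_iff.mpr ⟨cth θ, cth_norm _, rfl⟩

lemma pt_zero_eq_one : pt (n := n) 0 = pt 1 := by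
  apply Prod.ext_iff.mpr
  refine ⟨rfl, ?_⟩
  apply Subtype.ext
  show cth ((0:I) : ℝ) • (z₀ n : Amb n) = cth ((1:I) : ℝ) • (z₀ n : Amb n)
  rw [Set.Icc.coe_zero, Set.Icc.coe_one, cth_zero, cth_one]

lemma no_global_section (dB : DStruct (CPSpace n)) (U : Set (Sph n × Sph n))
    (hU : DParamSecSet (assocDStruct dB (hopfMap n)) (hopfMap n) U)
    (hG : GammaEB (assocDStruct dB (hopfMap n)) (hopfMap n) ⊆ U) : False := by
  obtain ⟨s, hsc, hs⟩ := hU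
  set Pt : I → ↥U := fun θ => ⟨pt θ, hG (pt_mem_gamma dB θ)⟩ with hPt
  have hPtc : Continuous Pt := Continuous.subtype_mk continuous_pt _
  set K : I × I → ℂ := fun q => ip (z₀ n : Amb n) ((s (Pt q.1) q.2 : Sph n) : Amb n) with hK
  have hKc : Continuous K := by
    rw [hK]
    have h : (fun q : I × I => ip (z₀ n : Amb n) ((s (Pt q.1) q.2 : Sph n) : Amb n))
        = (fun p : Amb n × Amb n => ip p.1 p.2) ∘ (fun q : I × I =>
          ((z₀ n : Amb n), ((s (Pt q.1) q.2 : Sph n) : Amb n))) := rfl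
    rw [h]
    apply continuous_ip.comp
    apply Continuous.prodMk continuous_const
    apply continuous_subtype_val.comp
    exact ContinuousEval.continuous_eval.comp
      (((hsc.comp hPtc).comp continuous_fst).prodMk continuous_snd)
  have hfib : ∀ (θ t : I), hopfMap n (z₀ n) = hopfMap n (s (Pt θ) t) := by
    intro θ t
    obtain ⟨⟨_, b, hb⟩, h0, _⟩ := hs (Pt θ)
    have h1 : hopfMap n (s (Pt θ) 0) = b := hb 0
    have h2 : hopfMap n (s (Pt θ) t) = b := hb t
    rw [h0] at h1
    show hopfMap n (pt θ).1 = _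
    rw [← h1] at h2
    exact h2.symm
  have hKnorm : ∀ q : I × I, ‖K q‖ = 1 := fun q => (coeff_eq (hfib q.1 q.2)).1
  have hKne : ∀ q : I × I, K q ≠ 0 := by
    intro q h
    have h2 := hKnorm q
    rw [h] at h2
    simp at h2
  have hK0 : ∀ θ : I, K (θ, 0) = 1 := by
    intro θ
    obtain ⟨_, h0, _⟩ := hs (Pt θ)
    show ip _ ((s (Pt θ) 0 : Sph n) : Amb n) = 1
    rw [h0]
    exact ip_self _
  have hK1 : ∀ θ : I, K (θ, 1) = cth θ := by
    intro θ
    obtain ⟨_, _, h1⟩ := hs (Pt θ)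
    show ip _ ((s (Pt θ) 1 : Sph n) : Amb n) = _
    rw [h1]
    show ip (z₀ n : Amb n) (cth (θ : ℝ) • (z₀ n : Amb n)) = _
    rw [ip_smul_right, ip_self, mul_one]
  have hKper : ∀ t : I, K (0, t) = K (1, t) := by
    intro t
    have h : Pt 0 = Pt 1 := Subtype.ext pt_zero_eq_one
    show ip _ ((s (Pt 0) t : Sph n) : Amb n) = ip _ ((s (Pt 1) t : Sph n) : Amb n)
    rw [h]
  -- uniform continuity and partition
  obtain ⟨δ, hδ, hδK⟩ := Metric.uniformContinuous_iff.mp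
    (CompactSpace.uniformContinuous_of_continuous hKc) 2 (by norm_num)
  obtain ⟨N₀, hN₀⟩ := exists_nat_one_div_lt hδ
  set N : ℕ := N₀ + 1 with hN
  have hNpos : (0:ℝ) < N := by positivity
  have hNδ : 1 / (N:ℝ) < δ := by
    rw [hN]
    push_cast
    exact hN₀
  have htj_mem : ∀ j : ℕ, min ((j:ℝ) / N) 1 ∈ I := by
    intro j
    constructor
    · exact le_min (by positivity) zero_le_one
    · exact min_le_right _ _
  set tj : ℕ → I := fun j => ⟨min ((j:ℝ) / N) 1, htj_mem j⟩ with htj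
  have htj_le : ∀ j : ℕ, j ≤ N → ((tj j : ℝ)) = (j:ℝ) / N := by
    intro j hj
    apply min_eq_left
    rw [div_le_one hNpos]
    exact_mod_cast hj
  have htj0 : tj 0 = 0 := by
    apply Subtype.ext
    simp only [htj]
    norm_num
  have htjN : tj N = 1 := by
    apply Subtype.ext
    simp only [htj]
    rw [div_self (ne_of_gt hNpos)]
    norm_num
  -- the ratios
  set Q : ℕ → I → ℂ := fun j θ => K (θ, tj (j+1)) * (K (θ, tj j))⁻¹ with hQ
  have hQnorm : ∀ j (θ : I), ‖Q j θ‖ = 1 := by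
    intro j θ
    rw [hQ]
    simp only
    rw [norm_mul, norm_inv, hKnorm, hKnorm]
    norm_num
  have hQne : ∀ j, j < N → ∀ θ : I, Q j θ ≠ -1 := by
    intro j hj θ hcon
    have hstep : K (θ, tj (j+1)) = -1 * K (θ, tj j) := by
      have h := congrArg (fun x => x * K (θ, tj j)) hcon
      simp only [hQ] at h
      rwa [mul_assoc, inv_mul_cancel₀ (hKne _), mul_one] at h
    have hdist2 : dist (K (θ, tj (j+1))) (K (θ, tj j)) = 2 := by
      rw [dist_eq_norm, hstep]
      have h : (-1 : ℂ) * K (θ, tj j) - K (θ, tj j) = (-2) * K (θ, tj j) := by ring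
      rw [h, norm_mul, hKnorm]
      norm_num
    have hdistsmall : dist ((θ, tj (j+1)) : I × I) ((θ, tj j) : I × I) < δ := by
      rw [Prod.dist_eq]
      have h1 : dist θ θ = 0 := dist_self θ
      have h2 : dist (tj (j+1)) (tj j) = 1 / (N:ℝ) := by
        rw [Subtype.dist_eq, Real.dist_eq, htj_le (j+1) hj, htj_le j (le_of_lt hj)]
        have hval : ((j+1:ℕ):ℝ) / N - (j:ℝ)/N = 1 / N := by
          push_cast
          ring
        rw [hval, _root_.abs_of_nonneg (by positivity)]
      rw [h1, h2]
      rw [max_eq_right (by positivity)]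
      exact hNδ
    have := hδK hdistsmall
    rw [hdist2] at this
    exact lt_irrefl _ this
  have hQslit : ∀ j, j < N → ∀ θ : I, Q j θ ∈ slitPlane :=
    fun j hj θ => circ_slit (hQnorm j θ) (hQne j hj θ)
  -- the winding sum
  set W : I → ℝ := fun θ => ∑ j ∈ Finset.range N, Complex.arg (Q j θ) with hW
  have hQc : ∀ j, Continuous fun θ : I => Q j θ := by
    intro j
    exact (hKc.comp (continuous_id.prodMk continuous_const)).mul
      ((hKc.comp (continuous_id.prodMk continuous_const)).inv₀ fun θ => hKne _)
  have hWc : Continuous W := by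
    apply continuous_finset_sum
    intro j hj
    rw [continuous_iff_continuousAt]
    intro θ
    exact ContinuousAt.comp (g := Complex.arg)
      (Complex.continuousAt_arg (hQslit j (Finset.mem_range.mp hj) θ))
      (hQc j).continuousAt
  -- telescoping
  have habsQ : ∀ j (θ : I), ((‖Q j θ‖ : ℝ) : ℂ) = 1 := by
    intro j θ
    rw [hQnorm]
    norm_num
  have hexpQ : ∀ j (θ : I),
      Complex.exp ((Complex.arg (Q j θ) : ℂ) * Complex.I) = Q j θ := by
    intro j θ
    have h := Complex.norm_mul_exp_arg_mul_I (Q j θ)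
    rwa [habsQ, one_mul] at h
  have htel : ∀ m, m ≤ N → ∀ θ : I,
      Complex.exp ((↑(∑ j ∈ Finset.range m, Complex.arg (Q j θ)) : ℂ) * Complex.I)
        * K (θ, tj 0) = K (θ, tj m) := by
    intro m
    induction m with
    | zero =>
      intro _ θ
      simp
    | succ m ih =>
      intro hm θ
      rw [Finset.sum_range_succ, Complex.ofReal_add, add_mul, Complex.exp_add, hexpQ]
      have hQval : Q m θ = K (θ, tj (m+1)) * (K (θ, tj m))⁻¹ := rfl
      calc Complex.exp ((↑(∑ j ∈ Finset.range m, Complex.arg (Q j θ)) : ℂ) * Complex.I)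
            * Q m θ * K (θ, tj 0)
          = Q m θ * (Complex.exp
              ((↑(∑ j ∈ Finset.range m, Complex.arg (Q j θ)) : ℂ) * Complex.I)
            * K (θ, tj 0)) := by ring
        _ = Q m θ * K (θ, tj m) := by rw [ih (Nat.le_of_succ_le hm) θ]
        _ = K (θ, tj (m+1)) := by
            rw [hQval, mul_assoc, inv_mul_cancel₀ (hKne _), mul_one]
  have hWK : ∀ θ : I, Complex.exp ((↑(W θ) : ℂ) * Complex.I) = cth θ := by
    intro θ
    have h := htel N le_rfl θ
    rw [htj0, htjN, hK0, hK1] at h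
    rw [hW]
    simpa using h
  -- integrality
  have hint : ∀ θ : I, ∃ m : ℤ, W θ = 2 * Real.pi * (θ : ℝ) + m * (2 * Real.pi) := by
    intro θ
    have h := hWK θ
    rw [cth] at h
    obtain ⟨m, hm⟩ := Complex.exp_eq_exp_iff_exists_int.mp h
    refine ⟨m, ?_⟩
    have h2 : ((W θ : ℝ) : ℂ) = ((2 * Real.pi * (θ:ℝ) + m * (2 * Real.pi) : ℝ) : ℂ) := by
      push_cast
      push_cast at hm
      linear_combination (-Complex.I) * hm +
        ((W θ : ℂ) - 2 * (Real.pi:ℂ) * (θ:ℝ) - (m:ℂ) * (2 * (Real.pi:ℂ))) * Complex.I_sq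
    exact_mod_cast h2
  -- the winding function
  set g : I → ℝ := fun θ => (W θ - 2 * Real.pi * (θ : ℝ)) / (2 * Real.pi) with hg
  have hgc : Continuous g :=
    (hWc.sub (continuous_const.mul continuous_subtype_val)).div_const _
  have hgint : ∀ θ : I, ∃ m : ℤ, g θ = m := by
    intro θ
    obtain ⟨m, hm⟩ := hint θ
    refine ⟨m, ?_⟩
    rw [hg]
    simp only
    rw [hm]
    field_simp
    ring
  have hW01 : W 1 = W 0 := by
    rw [hW]
    simp only
    apply Finset.sum_congr rfl
    intro j _
    have h : Q j 1 = Q j 0 := by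
      show K (1, tj (j+1)) * (K (1, tj j))⁻¹ = K (0, tj (j+1)) * (K (0, tj j))⁻¹
      rw [← hKper, ← hKper]
    rw [h]
  have hg10 : g 1 = g 0 - 1 := by
    rw [hg]
    simp only [hW01, Set.Icc.coe_one, Set.Icc.coe_zero]
    field_simp
    ring
  -- intermediate value contradiction
  set G : ℝ → ℝ := fun x => g (Set.projIcc 0 1 zero_le_one x) with hGdef
  have hGc : Continuous G := hgc.comp continuous_projIcc
  have hproj0 : Set.projIcc (0:ℝ) 1 zero_le_one 0 = (0 : I) := by
    apply Subtype.ext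
    simp [Set.projIcc]
  have hproj1 : Set.projIcc (0:ℝ) 1 zero_le_one 1 = (1 : I) := by
    apply Subtype.ext
    simp [Set.projIcc]
  obtain ⟨m₀, hm₀⟩ := hgint 0
  have hG0 : G 0 = m₀ := by rw [hGdef]; simp only; rw [hproj0, hm₀]
  have hG1 : G 1 = m₀ - 1 := by rw [hGdef]; simp only; rw [hproj1, hg10, hm₀]
  have hy : (m₀ : ℝ) - 1/2 ∈ Set.Icc (G 1) (G 0) := by
    rw [hG0, hG1]
    constructor <;> [linarith; linarith]
  obtain ⟨x, _, hx⟩ := intermediate_value_Icc' zero_le_one hGc.continuousOn hy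
  obtain ⟨k, hk⟩ := hgint (Set.projIcc 0 1 zero_le_one x)
  have hGx : G x = k := hk
  rw [hx] at hGx
  have hcast : ((2 * k : ℤ) : ℝ) = ((2 * m₀ - 1 : ℤ) : ℝ) := by
    push_cast
    linarith
  have := Int.cast_injective hcast
  omega

end HopfAux
/-- For the Hopf fibration `p : S^{2n+1} → ℂP^n`, with `S^{2n+1}`
equipped with the d-structure associated to any d-structure on `ℂP^n`, the directed
parametrized topological complexity equals `2`. -/
theorem vTCp_hopf (n : ℕ) (dB : DStruct (CPSpace n)) :
    vTCp (assocDStruct dB (hopfMap n)) (hopfMap n) = 2 := by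
  classical
  apply le_antisymm
  · apply sInf_le
    refine ⟨2, by norm_cast, ![HopfAux.Ua n (-1), HopfAux.Ua n 1], ?_, ?_⟩
    · intro i
      fin_cases i
      · simp only [Matrix.cons_val_zero]
        exact ⟨HopfAux.isENRSet_Ua (by norm_num) (by norm_num),
          HopfAux.dparamsec_Ua dB (by norm_num) (by norm_num) 0 (by simp)⟩
      · simp only [Matrix.cons_val_one, Matrix.head_cons]
        refine ⟨HopfAux.isENRSet_Ua (by norm_num) (by norm_num),
          HopfAux.dparamsec_Ua dB (by norm_num) (by norm_num) Real.pi ?_⟩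
        rw [Complex.exp_pi_mul_I]
        norm_num
    · rw [HopfAux.gamma_eq dB]
      intro q hq
      by_cases hipval : HopfAux.ip (q.1 : HopfAux.Amb n) (q.2 : HopfAux.Amb n) = -1
      · apply Set.mem_iUnion.mpr
        refine ⟨1, ?_⟩
        simp only [Matrix.cons_val_one, Matrix.head_cons]
        exact ⟨hq, by rw [hipval]; norm_num⟩
      · apply Set.mem_iUnion.mpr
        refine ⟨0, ?_⟩
        simp only [Matrix.cons_val_zero]
        exact ⟨hq, hipval⟩
  · apply le_sInf
    rintro x ⟨m, rfl, U, hU, hcov⟩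
    match m with
    | 0 =>
      exfalso
      have hmem : (HopfAux.z₀ n, HopfAux.z₀ n)
          ∈ GammaEB (assocDStruct dB (hopfMap n)) (hopfMap n) := by
        rw [HopfAux.gamma_eq dB]
        exact rfl
      obtain ⟨i, _⟩ := Set.mem_iUnion.mp (hcov hmem)
      exact i.elim0
    | 1 =>
      exfalso
      apply HopfAux.no_global_section dB (U 0) (hU 0).2
      intro q hq
      obtain ⟨i, hi⟩ := Set.mem_iUnion.mp (hcov hq)
      rwa [Subsingleton.elim i 0] at hi
    | (m+2) =>
      have h2 : ((2:ℕ) : ℕ∞) ≤ ((m+2:ℕ) : ℕ∞) := Nat.cast_le.mpr (by omega)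
      simp only [Nat.cast_ofNat] at h2 ⊢
      exact_mod_cast h2

end
end
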